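/- arXiv:1506.09015 — 6 statements merged into one kernel-verified Lean document; each statement's English description precedes it below -/
import Mathlib

section
/- Let X satisfy P(X = s·r^(k−1)) = p·q^(k−1) for k ≥ 1, with 0 < p < 1, q = 1 − p, s > 0, and r = 1/q. Then E[X·1{X ≤ x}] ∼ s·p·log_r(x/s) as x → ∞, i.e., the ratio of the two sides tends to 1. -/
open MeasureTheory ProbabilityTheory Filter

theorem petersburg_truncated_mean_asymptotics
    {Ω : Type*} [MeasureSpace Ω] [IsProbabilityMeasure (ℙ : Measure Ω)]
    (X : Ω → ℝ) (hX : Measurable X) (p q s r : ℝ)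
    (hp : 0 < p) (hp1 : p < 1) (hq : q = 1 - p) (hs : 0 < s) (hr : r = 1 / q)
    (hlaw : ∀ k : ℕ, ℙ {ω | X ω = s * r ^ k} = ENNReal.ofReal (p * q ^ k)) :
    Filter.Tendsto
      (fun x : ℝ => (∫ ω in {ω | X ω ≤ x}, X ω ∂ℙ) / (s * p * Real.logb r (x / s)))
      Filter.atTop (nhds 1) := by
  have hq0 : 0 < q := by rw [hq]; linarith
  have hq1 : q < 1 := by rw [hq]; linarith
  have hr1 : 1 < r := by rw [hr]; exact one_lt_one_div hq0 hq1
  have hr0 : 0 < r := lt_trans one_pos hr1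
  have hrq : r * q = 1 := by rw [hr]; field_simp
  set A : ℕ → Set Ω := fun k => {ω | X ω = s * r ^ k} with hA
  have hAm : ∀ k, MeasurableSet (A k) := fun k => hX (measurableSet_singleton _)
  have hinj : Function.Injective (fun k : ℕ => s * r ^ k) := by
    have hsm : StrictMono (fun k : ℕ => s * r ^ k) := fun a b hab =>
      mul_lt_mul_of_pos_left (pow_lt_pow_right₀ hr1 hab) hs
    exact hsm.injective
  have hdisj : Pairwise (Function.onFun Disjoint A) := by
    intro i j hij
    refine Set.disjoint_left.2 fun ω hi hj => hij (hinj ?_)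
    simp only [hA, Set.mem_setOf_eq] at hi hj
    simp only [hi.symm.trans hj]
  have hUnull : ℙ (⋃ k, A k)ᶜ = 0 := by
    have hU : ℙ (⋃ k, A k) = 1 := by
      rw [measure_iUnion hdisj hAm]
      simp_rw [hA]
      simp_rw [hlaw]
      rw [← ENNReal.ofReal_tsum_of_nonneg (fun k => by positivity)
        ((summable_geometric_of_lt_one hq0.le hq1).mul_left p)]
      rw [tsum_mul_left, tsum_geometric_of_lt_one hq0.le hq1]
      have : p * (1 - q)⁻¹ = 1 := by rw [hq, sub_sub_cancel, mul_inv_cancel₀ hp.ne']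
      rw [this, ENNReal.ofReal_one]
    rw [measure_compl (MeasurableSet.iUnion hAm) (measure_ne_top _ _), hU, measure_univ,
      tsub_self]
  have hae : ∀ᵐ ω ∂(ℙ : Measure Ω), ω ∈ ⋃ k, A k := by
    rw [Filter.eventually_iff, MeasureTheory.mem_ae_iff]
    exact hUnull
  have hint : ∀ i : ℕ, IntegrableOn X (A i) ℙ := by
    intro i
    exact (integrableOn_congr_fun (g := fun _ => s * r ^ i) (fun ω hω => hω) (hAm i)).2
      (integrableOn_const (measure_ne_top _ _))
  have hIk : ∀ i : ℕ, ∫ ω in A i, X ω ∂ℙ = p * q ^ i * (s * r ^ i) := by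
    intro i
    rw [setIntegral_congr_fun (g := fun _ => s * r ^ i) (hAm i) (fun ω hω => hω),
      setIntegral_const]
    rw [show A i = {ω | X ω = s * r ^ i} from rfl, measureReal_def, hlaw i, ENNReal.toReal_ofReal (by positivity), smul_eq_mul]
  have hkey : ∀ x : ℝ, s ≤ x → ∫ ω in {ω | X ω ≤ x}, X ω ∂ℙ
      = s * p * ((⌊Real.logb r (x / s)⌋₊ : ℝ) + 1) := by
    intro x hx
    set t := Real.logb r (x / s) with ht
    have hxs : 0 < x / s := div_pos (lt_of_lt_of_le hs hx) hs
    have ht0 : 0 ≤ t := Real.logb_nonneg hr1 ((one_le_div hs).2 hx)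
    set N := ⌊t⌋₊ with hN
    have hmem : ∀ k : ℕ, (s * r ^ k ≤ x ↔ k ≤ N) := by
      intro k
      rw [hN, Nat.le_floor_iff ht0, ht, Real.le_logb_iff_rpow_le hr1 hxs,
        Real.rpow_natCast, le_div_iff₀ hs, mul_comm]
    have hset : {ω | X ω ≤ x} =ᵐ[(ℙ : Measure Ω)] ⋃ k ∈ Finset.range (N + 1), A k := by
      rw [Filter.eventuallyEq_set]
      filter_upwards [hae] with ω hω
      obtain ⟨k, hk⟩ := Set.mem_iUnion.1 hω
      have hk' : X ω = s * r ^ k := hk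
      constructor
      · intro h
        refine Set.mem_biUnion (Finset.mem_range.2 (Nat.lt_succ_of_le ?_)) hk
        exact (hmem k).1 (hk' ▸ h)
      · intro h
        obtain ⟨j, hj, hj'⟩ := Set.mem_iUnion₂.1 h
        have hj'' : X ω = s * r ^ j := hj'
        rw [hj'']
        exact (hmem j).2 (Nat.lt_succ_iff.1 (Finset.mem_range.1 hj))
    rw [setIntegral_congr_set hset,
      integral_biUnion_finset _ (fun i _ => hAm i) (hdisj.set_pairwise _) (fun i _ => hint i)]
    have hterm : ∀ i : ℕ, p * q ^ i * (s * r ^ i) = s * p := by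
      intro i
      have h1 : q ^ i * r ^ i = 1 := by rw [← mul_pow, mul_comm q r, hrq, one_pow]
      calc p * q ^ i * (s * r ^ i) = s * p * (q ^ i * r ^ i) := by ring
        _ = s * p := by rw [h1, mul_one]
    simp_rw [hIk, hterm]
    rw [Finset.sum_const, Finset.card_range, nsmul_eq_mul]
    push_cast
    ring
  have hg : Tendsto (fun t : ℝ => ((⌊t⌋₊ : ℝ) + 1) / t) atTop (nhds 1) := by
    have h1 : Tendsto (fun t : ℝ => 1 + 1 / t) atTop (nhds 1) := by
      have := tendsto_const_nhds (x := (1:ℝ)) (f := atTop) |>.add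
        (tendsto_inv_atTop_zero (𝕜 := ℝ))
      simpa [one_div] using this
    apply tendsto_of_tendsto_of_tendsto_of_le_of_le' tendsto_const_nhds h1
    · filter_upwards [eventually_gt_atTop (0:ℝ)] with t ht
      rw [le_div_iff₀ ht]
      have := Nat.lt_floor_add_one t
      linarith
    · filter_upwards [eventually_gt_atTop (0:ℝ)] with t ht
      rw [div_le_iff₀ ht]
      have h2 : (1 + 1 / t) * t = t + 1 := by field_simp
      have := Nat.floor_le ht.le
      linarith
  have hL : Tendsto (fun x : ℝ => Real.logb r (x / s)) atTop atTop :=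
    (Real.tendsto_logb_atTop hr1).comp (tendsto_id.atTop_div_const hs)
  have hcomp : Tendsto
      (fun x : ℝ => ((⌊Real.logb r (x / s)⌋₊ : ℝ) + 1) / Real.logb r (x / s))
      atTop (nhds 1) := hg.comp hL
  apply hcomp.congr'
  filter_upwards [eventually_ge_atTop s] with x hx
  rw [hkey x hx, mul_div_mul_left _ _ (by positivity : s * p ≠ 0)]
end

section
/- Let X, X₁, X₂, … be i.i.d. with P(X = s·r^(k−1)) = p·q^(k−1) for k ≥ 1, where 0 < p < 1, q = 1 − p, s > 0, and r = 1/q. Let Sₙ = X₁ + ⋯ + Xₙ. Then Sₙ/(n·log_r n) converges in probability to s·p as n → ∞. -/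
open MeasureTheory ProbabilityTheory Filter

noncomputable def trunc (s r : ℝ) (m : ℕ) : ℝ → ℝ :=
  fun x => ∑ k ∈ Finset.range m, Set.indicator {y : ℝ | y = s * r ^ k} (fun _ => s * r ^ k) x

lemma trunc_measurable (s r : ℝ) (m : ℕ) : Measurable (trunc s r m) := by
  apply Finset.measurable_sum
  intro k _
  exact (measurable_const.indicator (measurableSet_eq))

lemma pow_inj {s r : ℝ} (hs : 0 < s) (hr1 : 1 < r) {j k : ℕ}
    (h : s * r ^ j = s * r ^ k) : j = k := by
  have := mul_left_cancel₀ hs.ne' h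
  exact pow_right_injective₀ (by positivity) hr1.ne' this

lemma trunc_apply_eq {s r : ℝ} (hs : 0 < s) (hr1 : 1 < r) {k m : ℕ} (hk : k < m) :
    trunc s r m (s * r ^ k) = s * r ^ k := by
  unfold trunc
  rw [Finset.sum_eq_single_of_mem k (Finset.mem_range.2 hk)]
  · rw [Set.indicator_of_mem (by simp)]
  · intro j _ hj
    apply Set.indicator_of_notMem
    simp only [Set.mem_setOf_eq]
    intro h
    exact hj (pow_inj hs hr1 h.symm)

lemma trunc_eq_zero {s r : ℝ} {m : ℕ} {x : ℝ} (hx : ∀ k < m, x ≠ s * r ^ k) :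
    trunc s r m x = 0 := by
  unfold trunc
  apply Finset.sum_eq_zero
  intro k hk
  exact Set.indicator_of_notMem (by simpa using hx k (Finset.mem_range.1 hk)) _

lemma trunc_sq {s r : ℝ} (hs : 0 < s) (hr1 : 1 < r) (m : ℕ) (x : ℝ) :
    (trunc s r m x) ^ 2
      = ∑ k ∈ Finset.range m, Set.indicator {y : ℝ | y = s * r ^ k} (fun _ => (s * r ^ k) ^ 2) x := by
  by_cases h : ∃ k < m, x = s * r ^ k
  · obtain ⟨k, hk, rfl⟩ := h
    rw [trunc_apply_eq hs hr1 hk,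
      Finset.sum_eq_single_of_mem k (Finset.mem_range.2 hk)]
    · rw [Set.indicator_of_mem (by simp)]
    · intro j _ hj
      apply Set.indicator_of_notMem
      simp only [Set.mem_setOf_eq]
      intro h
      exact hj (pow_inj hs hr1 h.symm)
  · push_neg at h
    rw [trunc_eq_zero h]
    rw [Finset.sum_eq_zero, zero_pow two_ne_zero]
    intro k hk
    exact Set.indicator_of_notMem (by simpa using h k (Finset.mem_range.1 hk)) _

lemma trunc_nonneg {s r : ℝ} (hs : 0 < s) (hr0 : 0 < r) (m : ℕ) (x : ℝ) :
    0 ≤ trunc s r m x := by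
  apply Finset.sum_nonneg
  intro k _
  exact Set.indicator_nonneg (fun _ _ => by positivity) _

lemma trunc_le_bound {s r : ℝ} (hs : 0 < s) (hr0 : 0 < r) (m : ℕ) (x : ℝ) :
    trunc s r m x ≤ ∑ k ∈ Finset.range m, s * r ^ k := by
  apply Finset.sum_le_sum
  intro k _
  exact Set.indicator_le_self' (fun _ _ => by positivity) x

section Integrals

variable {Ω : Type*} [MeasureSpace Ω] [IsProbabilityMeasure (ℙ : Measure Ω)]
variable {Xi : Ω → ℝ} {p q s r : ℝ}

lemma integral_ind_sum (hX : Measurable Xi)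
    (hlaw : ∀ k : ℕ, ℙ {ω | Xi ω = s * r ^ k} = ENNReal.ofReal (p * q ^ k))
    (hpq : ∀ k : ℕ, 0 ≤ p * q ^ k) (m : ℕ) (a : ℕ → ℝ) :
    ∫ ω, ∑ k ∈ Finset.range m, Set.indicator {y : ℝ | y = s * r ^ k} (fun _ => a k) (Xi ω) ∂ℙ
      = ∑ k ∈ Finset.range m, a k * (p * q ^ k) := by
  have hmeas : ∀ k : ℕ, MeasurableSet (Xi ⁻¹' {y : ℝ | y = s * r ^ k}) :=
    fun k => hX (measurableSet_eq)
  have hpt : ∀ k, (fun ω => Set.indicator {y : ℝ | y = s * r ^ k} (fun _ => a k) (Xi ω))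
      = (Xi ⁻¹' {y : ℝ | y = s * r ^ k}).indicator (fun _ => a k) := by
    intro k
    ext ω
    classical
    rw [Set.indicator_apply, Set.indicator_apply]
    simp only [Set.mem_preimage, Set.mem_setOf_eq]
  rw [integral_finset_sum]
  · apply Finset.sum_congr rfl
    intro k _
    rw [hpt k, integral_indicator_const _ (hmeas k)]
    have : (ℙ (Xi ⁻¹' {y : ℝ | y = s * r ^ k})) = ENNReal.ofReal (p * q ^ k) := hlaw k
    rw [measureReal_def, this, ENNReal.toReal_ofReal (hpq k)]
    simp [mul_comm]
  · intro k _
    rw [hpt k]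
    exact (integrable_const (a k)).indicator (hmeas k)

lemma memLp_trunc (hX : Measurable Xi) (hs : 0 < s) (hr1 : 1 < r) (m : ℕ) :
    MemLp (fun ω => trunc s r m (Xi ω)) 2 ℙ := by
  have hr0 : 0 < r := lt_trans one_pos hr1
  apply MemLp.of_bound ((trunc_measurable s r m).comp hX).aestronglyMeasurable
    (∑ k ∈ Finset.range m, s * r ^ k)
  exact Filter.Eventually.of_forall fun ω => by
    rw [Real.norm_eq_abs, Function.comp_apply, abs_of_nonneg (trunc_nonneg hs hr0 m _)]
    exact trunc_le_bound hs hr0 m _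

lemma integral_trunc (hX : Measurable Xi)
    (hlaw : ∀ k : ℕ, ℙ {ω | Xi ω = s * r ^ k} = ENNReal.ofReal (p * q ^ k))
    (hp : 0 < p) (hq0 : 0 < q) (hrq : r * q = 1) (m : ℕ) :
    ∫ ω, trunc s r m (Xi ω) ∂ℙ = m * (s * p) := by
  have hpq : ∀ k : ℕ, 0 ≤ p * q ^ k := fun k => by positivity
  unfold trunc
  rw [integral_ind_sum hX hlaw hpq m _]
  rw [Finset.sum_congr rfl (fun k _ => ?_), Finset.sum_const, Finset.card_range,
    nsmul_eq_mul]
  have : (r * q) ^ k = 1 := by rw [hrq, one_pow]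
  calc s * r ^ k * (p * q ^ k) = s * p * (r * q) ^ k := by rw [mul_pow]; ring
    _ = s * p := by rw [this, mul_one]

lemma integral_trunc_sq (hX : Measurable Xi)
    (hlaw : ∀ k : ℕ, ℙ {ω | Xi ω = s * r ^ k} = ENNReal.ofReal (p * q ^ k))
    (hp : 0 < p) (hq0 : 0 < q) (hs : 0 < s) (hr1 : 1 < r) (hrq : r * q = 1) (m : ℕ) :
    ∫ ω, (trunc s r m (Xi ω)) ^ 2 ∂ℙ = ∑ k ∈ Finset.range m, s ^ 2 * p * r ^ k := by
  have hpq : ∀ k : ℕ, 0 ≤ p * q ^ k := fun k => by positivity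
  rw [show (fun ω => (trunc s r m (Xi ω)) ^ 2)
      = fun ω => ∑ k ∈ Finset.range m,
        Set.indicator {y : ℝ | y = s * r ^ k} (fun _ => (s * r ^ k) ^ 2) (Xi ω) from
    funext fun ω => trunc_sq hs hr1 m (Xi ω)]
  rw [integral_ind_sum hX hlaw hpq m _]
  apply Finset.sum_congr rfl
  intro k _
  have h1 : (r * q) ^ k = 1 := by rw [hrq, one_pow]
  calc (s * r ^ k) ^ 2 * (p * q ^ k) = s ^ 2 * p * r ^ k * (r * q) ^ k := by
        rw [mul_pow, mul_pow]; ring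
    _ = s ^ 2 * p * r ^ k := by rw [h1, mul_one]

lemma variance_trunc_le (hX : Measurable Xi)
    (hlaw : ∀ k : ℕ, ℙ {ω | Xi ω = s * r ^ k} = ENNReal.ofReal (p * q ^ k))
    (hp : 0 < p) (hq0 : 0 < q) (hs : 0 < s) (hr1 : 1 < r) (hrq : r * q = 1) (m : ℕ) :
    variance (fun ω => trunc s r m (Xi ω)) ℙ ≤ s ^ 2 * p * r ^ m / (r - 1) := by
  have hml := memLp_trunc hX hs hr1 (m := m)
  rw [variance_eq_sub hml]
  have h2 : (∫ ω, ((fun ω => trunc s r m (Xi ω)) ^ 2) ω ∂ℙ)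
      = ∑ k ∈ Finset.range m, s ^ 2 * p * r ^ k := by
    simpa [Pi.pow_apply] using integral_trunc_sq hX hlaw hp hq0 hs hr1 hrq m
  rw [h2]
  have h3 : ∑ k ∈ Finset.range m, s ^ 2 * p * r ^ k
      = s ^ 2 * p * ((r ^ m - 1) / (r - 1)) := by
    rw [← Finset.mul_sum, geom_sum_eq hr1.ne' m]
  rw [h3]
  have hr1' : 0 < r - 1 := by linarith
  have h4 : (r ^ m - 1) / (r - 1) ≤ r ^ m / (r - 1) :=
    (div_le_div_iff_of_pos_right hr1').2 (by linarith)
  have h5 : s ^ 2 * p * ((r ^ m - 1) / (r - 1)) ≤ s ^ 2 * p * r ^ m / (r - 1) := by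
    rw [mul_div_assoc]
    exact mul_le_mul_of_nonneg_left h4 (by positivity)
  exact le_trans (sub_le_self _ (sq_nonneg _)) h5

end Integrals

lemma tsum_ofReal_geom {q a : ℝ} (hq0 : 0 ≤ q) (hq1 : q < 1) (ha : 0 ≤ a) :
    ∑' k : ℕ, ENNReal.ofReal (a * q ^ k) = ENNReal.ofReal (a * (1 - q)⁻¹) := by
  rw [← ENNReal.ofReal_tsum_of_nonneg (fun k => by positivity)
    ((summable_geometric_of_lt_one hq0 hq1).mul_left a)]
  rw [tsum_mul_left, tsum_geometric_of_lt_one hq0 hq1]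

section Tail

variable {Ω : Type*} [MeasureSpace Ω] [IsProbabilityMeasure (ℙ : Measure Ω)]
variable {Xi : Ω → ℝ} {p q s r : ℝ}

lemma prob_ne_trunc_le (hX : Measurable Xi)
    (hlaw : ∀ k : ℕ, ℙ {ω | Xi ω = s * r ^ k} = ENNReal.ofReal (p * q ^ k))
    (hp : 0 < p) (hq0 : 0 < q) (hq1 : q < 1) (hpq : 1 - q = p)
    (hs : 0 < s) (hr1 : 1 < r) (m : ℕ) :
    ℙ {ω | Xi ω ≠ trunc s r m (Xi ω)} ≤ ENNReal.ofReal (q ^ m) := by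
  set E : ℕ → Set Ω := fun k => {ω | Xi ω = s * r ^ k} with hE
  have hEmeas : ∀ k, MeasurableSet (E k) := fun k => hX measurableSet_eq
  have hdisj : Pairwise (Function.onFun Disjoint E) := by
    intro j k hjk
    rw [Function.onFun, Set.disjoint_left]
    intro ω hj hk
    exact hjk (pow_inj hs hr1 (hj.symm.trans hk))
  have hG : ℙ (⋃ k, E k) = 1 := by
    rw [measure_iUnion hdisj hEmeas]
    have : ∀ k, ℙ (E k) = ENNReal.ofReal (p * q ^ k) := hlaw
    simp_rw [this]
    rw [tsum_ofReal_geom hq0.le hq1 hp.le, hpq, mul_inv_cancel₀ hp.ne', ENNReal.ofReal_one]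
  have hGc : ℙ ((⋃ k, E k)ᶜ) = 0 := by
    rw [measure_compl (MeasurableSet.iUnion hEmeas) (measure_ne_top _ _), hG,
      measure_univ, tsub_self]
  have hsub : {ω | Xi ω ≠ trunc s r m (Xi ω)}
      ⊆ (⋃ k, E k)ᶜ ∪ ⋃ k : ℕ, E (m + k) := by
    intro ω hω
    by_cases hωG : ω ∈ ⋃ k, E k
    · right
      obtain ⟨k, hk⟩ := Set.mem_iUnion.1 hωG
      have hk' : Xi ω = s * r ^ k := hk
      have hmk : m ≤ k := by
        by_contra hlt
        push_neg at hlt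
        exact hω (by rw [hk', trunc_apply_eq hs hr1 hlt])
      exact Set.mem_iUnion.2 ⟨k - m, by simpa [Nat.add_sub_cancel' hmk] using hk⟩
    · exact Or.inl hωG
  calc ℙ {ω | Xi ω ≠ trunc s r m (Xi ω)}
      ≤ ℙ ((⋃ k, E k)ᶜ) + ℙ (⋃ k : ℕ, E (m + k)) :=
        le_trans (measure_mono hsub) (measure_union_le _ _)
    _ ≤ 0 + ∑' k : ℕ, ℙ (E (m + k)) := by
        rw [hGc]
        exact add_le_add le_rfl (measure_iUnion_le _)
    _ ≤ ENNReal.ofReal (q ^ m) := by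
        rw [zero_add]
        have : ∀ k : ℕ, ℙ (E (m + k)) = ENNReal.ofReal ((p * q ^ m) * q ^ k) := by
          intro k
          rw [hlaw (m + k), pow_add]
          ring_nf
        simp_rw [this]
        rw [tsum_ofReal_geom hq0.le hq1 (by positivity), hpq]
        rw [show p * q ^ m * p⁻¹ = q ^ m * (p * p⁻¹) by ring, mul_inv_cancel₀ hp.ne',
          mul_one]

end Tail


theorem petersburg_feller_weak_law
    {Ω : Type*} [MeasureSpace Ω] [IsProbabilityMeasure (ℙ : Measure Ω)]
    (X : ℕ → Ω → ℝ) (hX : ∀ i, Measurable (X i)) (p q s r : ℝ)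
    (hp : 0 < p) (hp1 : p < 1) (hq : q = 1 - p) (hs : 0 < s) (hr : r = 1 / q)
    (hindep : iIndepFun X ℙ)
    (hlaw : ∀ i, ∀ k : ℕ, ℙ {ω | X i ω = s * r ^ k} = ENNReal.ofReal (p * q ^ k)) :
    ∀ ε : ℝ, 0 < ε →
      Filter.Tendsto
        (fun n : ℕ =>
          ℙ {ω | ε < |(∑ i ∈ Finset.range n, X i ω) / (n * Real.logb r n) - s * p|})
        Filter.atTop (nhds 0) := by
  intro ε hε
  have hq0 : 0 < q := by rw [hq]; linarith
  have hq1 : q < 1 := by rw [hq]; linarith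
  have hr1 : 1 < r := by rw [hr]; exact one_lt_one_div hq0 hq1
  have hr0 : 0 < r := lt_trans one_pos hr1
  have hrm1 : 0 < r - 1 := by linarith
  have hrq : r * q = 1 := by rw [hr]; field_simp
  have hpq' : 1 - q = p := by rw [hq]; ring
  have hε2 : (0:ℝ) < ε / 2 := by linarith
  set L : ℕ → ℝ := fun n => Real.logb r n with hLdef
  set m : ℕ → ℕ := fun n => ⌊Real.logb r ((n : ℝ) * L n)⌋₊ with hmdef
  set Y : ℕ → ℕ → Ω → ℝ := fun n i => fun ω => trunc s r (m n) (X i ω) with hYdef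
  set T : ℕ → Ω → ℝ := fun n => ∑ i ∈ Finset.range n, Y n i with hTdef
  set D : ℝ := s ^ 2 * p / ((r - 1) * (ε / 2) ^ 2) with hDdef
  have hD0 : 0 ≤ D := div_nonneg (by positivity) (mul_nonneg hrm1.le (by positivity))
  -- per n facts
  have hmemY : ∀ n i, MemLp (Y n i) 2 ℙ := fun n i => memLp_trunc (hX i) hs hr1 (m := m n)
  have hEY : ∀ n i, ∫ ω, Y n i ω ∂ℙ = (m n : ℝ) * (s * p) := fun n i =>
    integral_trunc (hX i) (hlaw i) hp hq0 hrq (m n)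
  have hVarY : ∀ n i, variance (Y n i) ℙ ≤ s ^ 2 * p * r ^ (m n) / (r - 1) := fun n i =>
    variance_trunc_le (hX i) (hlaw i) hp hq0 hs hr1 hrq (m n)
  have hmemT : ∀ n, MemLp (T n) 2 ℙ := fun n => memLp_finsetSum' _ (fun i _ => hmemY n i)
  have hET : ∀ n, ∫ ω, T n ω ∂ℙ = (n : ℝ) * ((m n : ℝ) * (s * p)) := by
    intro n
    have h1 : ∫ ω, T n ω ∂ℙ = ∑ i ∈ Finset.range n, ∫ ω, Y n i ω ∂ℙ := by
      rw [show (fun ω => T n ω) = fun ω => ∑ i ∈ Finset.range n, Y n i ω from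
        funext fun ω => Finset.sum_apply ω _ _]
      exact integral_finset_sum _ (fun i _ => (hmemY n i).integrable one_le_two)
    rw [h1]
    rw [Finset.sum_congr rfl (fun i _ => hEY n i), Finset.sum_const, Finset.card_range,
      nsmul_eq_mul]
  have hindepY : ∀ n, iIndepFun (Y n) ℙ := fun n =>
    hindep.comp (fun _ => trunc s r (m n)) (fun _ => trunc_measurable s r (m n))
  have hVarT : ∀ n, variance (T n) ℙ ≤ (n : ℝ) * (s ^ 2 * p * r ^ (m n) / (r - 1)) := by
    intro n
    rw [hTdef, IndepFun.variance_sum (fun i _ => hmemY n i)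
      (fun i _ j _ hij => (hindepY n).indepFun hij)]
    calc ∑ i ∈ Finset.range n, variance (Y n i) ℙ
        ≤ ∑ i ∈ Finset.range n, s ^ 2 * p * r ^ (m n) / (r - 1) :=
          Finset.sum_le_sum fun i _ => hVarY n i
      _ = (n : ℝ) * (s ^ 2 * p * r ^ (m n) / (r - 1)) := by
          rw [Finset.sum_const, Finset.card_range, nsmul_eq_mul]
  have hbad : ∀ n, ℙ (⋃ i ∈ Finset.range n, {ω | X i ω ≠ Y n i ω})
      ≤ ENNReal.ofReal ((n : ℝ) * q ^ (m n)) := by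
    intro n
    refine le_trans (measure_biUnion_finset_le _ _) ?_
    calc ∑ i ∈ Finset.range n, ℙ {ω | X i ω ≠ Y n i ω}
        ≤ ∑ _i ∈ Finset.range n, ENNReal.ofReal (q ^ (m n)) :=
          Finset.sum_le_sum fun i _ =>
            prob_ne_trunc_le (hX i) (hlaw i) hp hq0 hq1 hpq' hs hr1 (m n)
      _ = ENNReal.ofReal ((n : ℝ) * q ^ (m n)) := by
          rw [Finset.sum_const, Finset.card_range, nsmul_eq_mul,
            ENNReal.ofReal_mul (by positivity : (0:ℝ) ≤ (n:ℝ)), ENNReal.ofReal_natCast]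
  -- asymptotics
  have hLtop : Tendsto L atTop atTop :=
    (Real.tendsto_logb_atTop hr1).comp tendsto_natCast_atTop_atTop
  have hlogL : Tendsto (fun n => Real.logb r (L n) / L n) atTop (nhds 0) := by
    have h1 : Tendsto (fun x : ℝ => Real.logb r x / x) atTop (nhds 0) := by
      have h2 := Real.isLittleO_log_id_atTop.tendsto_div_nhds_zero
      have h3 : (fun x : ℝ => Real.logb r x / x)
          = fun x => (Real.log x / x) * (Real.log r)⁻¹ := by
        funext x; rw [Real.logb]; ring
      rw [h3]
      simpa using h2.mul_const (Real.log r)⁻¹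
    exact h1.comp hLtop
  have hinvL : Tendsto (fun n => (L n)⁻¹) atTop (nhds 0) := hLtop.inv_tendsto_atTop
  have hmean0 : Tendsto (fun n => s * p * ((Real.logb r (L n) + 1) / L n)) atTop (nhds 0) := by
    have h4 : (fun n => s * p * ((Real.logb r (L n) + 1) / L n))
        = fun n => s * p * (Real.logb r (L n) / L n + (L n)⁻¹) := by
      funext n; rw [add_div, one_div]
    rw [h4]
    simpa using ((hlogL.add hinvL).const_mul (s * p))
  have hc3 : ∀ᶠ n in atTop, s * p * ((Real.logb r (L n) + 1) / L n) ≤ ε / 2 :=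
    hmean0.eventually (eventually_le_nhds hε2)
  have hc1 : ∀ᶠ n : ℕ in atTop, (1:ℝ) ≤ n := by
    filter_upwards [eventually_ge_atTop 1] with n hn
    exact_mod_cast hn
  have hc2 : ∀ᶠ n : ℕ in atTop, 1 ≤ L n := hLtop.eventually_ge_atTop 1
  -- main eventual bound
  have key : ∀ᶠ n : ℕ in atTop,
      ℙ {ω | ε < |(∑ i ∈ Finset.range n, X i ω) / (n * Real.logb r n) - s * p|}
        ≤ ENNReal.ofReal ((r + D) / L n) := by
    filter_upwards [hc1, hc2, hc3] with n hn1 hL1 h3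
    have hn0 : (0:ℝ) < n := by linarith
    have hL0 : 0 < L n := by linarith
    have hb1 : (1:ℝ) ≤ (n : ℝ) * L n := by nlinarith
    have hb0 : (0:ℝ) < (n : ℝ) * L n := by linarith
    have hmub : (m n : ℝ) ≤ Real.logb r ((n : ℝ) * L n) :=
      Nat.floor_le (Real.logb_nonneg hr1 hb1)
    have hmlb : Real.logb r ((n : ℝ) * L n) ≤ (m n : ℝ) + 1 :=
      (Nat.lt_floor_add_one _).le
    have hrmpos : (0:ℝ) < r ^ (m n) := by positivity
    have hrm_ub : r ^ (m n) ≤ (n : ℝ) * L n := by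
      have h5 : (r : ℝ) ^ ((m n : ℝ)) ≤ r ^ Real.logb r ((n : ℝ) * L n) :=
        Real.rpow_le_rpow_of_exponent_le hr1.le hmub
      rwa [Real.rpow_natCast, Real.rpow_logb hr0 hr1.ne' hb0] at h5
    have hrm_lb : (n : ℝ) * L n ≤ r ^ (m n) * r := by
      have h5 : r ^ Real.logb r ((n : ℝ) * L n) ≤ (r:ℝ) ^ ((m n : ℝ) + 1) :=
        Real.rpow_le_rpow_of_exponent_le hr1.le hmlb
      rwa [Real.rpow_logb hr0 hr1.ne' hb0,
        show ((m n : ℝ) + 1) = ((m n + 1 : ℕ) : ℝ) by push_cast; ring,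
        Real.rpow_natCast, pow_succ] at h5
    have hq_eq : q ^ (m n) = (r ^ (m n))⁻¹ := by
      rw [← one_div, eq_div_iff hrmpos.ne', ← mul_pow, mul_comm q r, hrq, one_pow]
    -- bad-set bound
    have hv : (n : ℝ) * q ^ (m n) ≤ r / L n := by
      rw [hq_eq]
      have h5 : (r ^ (m n))⁻¹ ≤ r / ((n : ℝ) * L n) := by
        rw [le_div_iff₀ hb0]
        calc (r ^ m n)⁻¹ * ((n : ℝ) * L n) ≤ (r ^ m n)⁻¹ * (r ^ m n * r) :=
              mul_le_mul_of_nonneg_left hrm_lb (by positivity)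
          _ = r := by field_simp
      calc (n : ℝ) * (r ^ m n)⁻¹ ≤ (n : ℝ) * (r / ((n : ℝ) * L n)) :=
            mul_le_mul_of_nonneg_left h5 hn0.le
        _ = r / L n := by field_simp
    -- chebyshev numeric bound
    have hvi : variance (T n) ℙ / ((ε / 2) * ((n : ℝ) * L n)) ^ 2 ≤ D / L n := by
      have h7 : variance (T n) ℙ / ((ε / 2) * ((n : ℝ) * L n)) ^ 2
          ≤ ((n : ℝ) * (s ^ 2 * p * r ^ (m n) / (r - 1))) / ((ε / 2) * ((n : ℝ) * L n)) ^ 2 := by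
        exact div_le_div_of_nonneg_right (hVarT n) (by positivity)
      have h8 : ((n : ℝ) * (s ^ 2 * p * (((n : ℝ) * L n)) / (r - 1)))
            / ((ε / 2) * ((n : ℝ) * L n)) ^ 2 = D / L n := by
        rw [hDdef]
        field_simp
      have h9 : ((n : ℝ) * (s ^ 2 * p * r ^ (m n) / (r - 1))) / ((ε / 2) * ((n : ℝ) * L n)) ^ 2
          ≤ ((n : ℝ) * (s ^ 2 * p * (((n : ℝ) * L n)) / (r - 1)))
            / ((ε / 2) * ((n : ℝ) * L n)) ^ 2 := by
        gcongr
      linarith [h7, h9, le_of_eq h8]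
    -- mean bound
    have hmean : |(n : ℝ) * ((m n : ℝ) * (s * p)) / ((n : ℝ) * L n) - s * p| ≤ ε / 2 := by
      have hbsplit : Real.logb r ((n : ℝ) * L n) = L n + Real.logb r (L n) := by
        rw [Real.logb_mul (by positivity) (by positivity)]
      have hup : (m n : ℝ) ≤ L n + Real.logb r (L n) := by rw [← hbsplit]; exact hmub
      have hlow : L n + Real.logb r (L n) ≤ (m n : ℝ) + 1 := by rw [← hbsplit]; exact hmlb
      have hlogL0 : 0 ≤ Real.logb r (L n) := Real.logb_nonneg hr1 hL1
      have habs : |(m n : ℝ) / L n - 1| ≤ (Real.logb r (L n) + 1) / L n := by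
        have hrw : (m n : ℝ) / L n - 1 = ((m n : ℝ) - L n) / L n := by field_simp
        rw [hrw, abs_div, abs_of_pos hL0]
        gcongr
        rw [abs_le]
        constructor <;> linarith
      have hrw2 : (n : ℝ) * ((m n : ℝ) * (s * p)) / ((n : ℝ) * L n)
          = s * p * ((m n : ℝ) / L n) := by field_simp
      rw [hrw2, show s * p * ((m n : ℝ) / L n) - s * p = s * p * ((m n : ℝ) / L n - 1) by ring,
        abs_mul, abs_of_pos (by positivity : (0:ℝ) < s * p)]
      calc s * p * |(m n : ℝ) / L n - 1| ≤ s * p * ((Real.logb r (L n) + 1) / L n) :=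
            mul_le_mul_of_nonneg_left habs (by positivity)
        _ ≤ ε / 2 := h3
    -- event inclusion
    have hSn : ∀ ω, ω ∉ (⋃ i ∈ Finset.range n, {ω | X i ω ≠ Y n i ω}) →
        (∑ i ∈ Finset.range n, X i ω) = T n ω := by
      intro ω hω
      have hTa : T n ω = ∑ i ∈ Finset.range n, Y n i ω := Finset.sum_apply ω _ _
      rw [hTa]
      refine Finset.sum_congr rfl fun i hi => ?_
      by_contra hne
      exact hω (Set.mem_biUnion hi hne)
    have hincl : {ω | ε < |(∑ i ∈ Finset.range n, X i ω) / (n * Real.logb r n) - s * p|}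
        ⊆ (⋃ i ∈ Finset.range n, {ω | X i ω ≠ Y n i ω})
          ∪ {ω | (ε / 2) * ((n : ℝ) * L n) ≤ |T n ω - ∫ ω', T n ω' ∂ℙ|} := by
      intro ω hω
      by_cases hωb : ω ∈ ⋃ i ∈ Finset.range n, {ω | X i ω ≠ Y n i ω}
      · exact Or.inl hωb
      right
      have hS : (∑ i ∈ Finset.range n, X i ω) = T n ω := hSn ω hωb
      simp only [Set.mem_setOf_eq] at hω ⊢
      rw [hS] at hω
      have hden : (n : ℝ) * Real.logb r (n : ℝ) = (n : ℝ) * L n := rfl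
      rw [hden] at hω
      by_contra hlt
      push_neg at hlt
      have hdec : T n ω / ((n : ℝ) * L n) - s * p
          = (T n ω - ∫ ω', T n ω' ∂ℙ) / ((n : ℝ) * L n)
            + ((∫ ω', T n ω' ∂ℙ) / ((n : ℝ) * L n) - s * p) := by
        field_simp
        ring
      have h9 : |T n ω / ((n : ℝ) * L n) - s * p|
          ≤ |T n ω - ∫ ω', T n ω' ∂ℙ| / ((n : ℝ) * L n)
            + |(∫ ω', T n ω' ∂ℙ) / ((n : ℝ) * L n) - s * p| := by
        rw [hdec]
        refine le_trans (abs_add_le _ _) ?_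
        rw [abs_div, abs_of_pos hb0]
      have h10 : |(∫ ω', T n ω' ∂ℙ) / ((n : ℝ) * L n) - s * p| ≤ ε / 2 := by
        rw [hET n]; exact hmean
      have h11 : |T n ω - ∫ ω', T n ω' ∂ℙ| / ((n : ℝ) * L n) < ε / 2 := by
        rw [div_lt_iff₀ hb0]
        linarith [hlt]
      linarith [hω, h9, h10, h11]
    calc ℙ {ω | ε < |(∑ i ∈ Finset.range n, X i ω) / (n * Real.logb r n) - s * p|}
        ≤ ℙ (⋃ i ∈ Finset.range n, {ω | X i ω ≠ Y n i ω})
          + ℙ {ω | (ε / 2) * ((n : ℝ) * L n) ≤ |T n ω - ∫ ω', T n ω' ∂ℙ|} :=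
          le_trans (measure_mono hincl) (measure_union_le _ _)
      _ ≤ ENNReal.ofReal ((n : ℝ) * q ^ (m n))
          + ENNReal.ofReal (variance (T n) ℙ / ((ε / 2) * ((n : ℝ) * L n)) ^ 2) :=
          add_le_add (hbad n)
            (meas_ge_le_variance_div_sq (hmemT n) (by positivity : (0:ℝ) < (ε / 2) * ((n : ℝ) * L n)))
      _ ≤ ENNReal.ofReal (r / L n) + ENNReal.ofReal (D / L n) :=
          add_le_add (ENNReal.ofReal_le_ofReal hv) (ENNReal.ofReal_le_ofReal hvi)
      _ = ENNReal.ofReal ((r + D) / L n) := by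
          rw [← ENNReal.ofReal_add (div_nonneg hr0.le hL0.le) (div_nonneg hD0 hL0.le), add_div]
  -- conclude by squeezing
  have hub : Tendsto (fun n => ENNReal.ofReal ((r + D) / L n)) atTop (nhds 0) := by
    have h12 : Tendsto (fun n => (r + D) / L n) atTop (nhds 0) := by
      have h13 : (fun n => (r + D) / L n) = fun n => (r + D) * (L n)⁻¹ := by
        funext n; rw [div_eq_mul_inv]
      rw [h13]
      simpa using hinvL.const_mul (r + D)
    simpa using ENNReal.tendsto_ofReal h12
  exact tendsto_of_tendsto_of_tendsto_of_le_of_le' tendsto_const_nhds hub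
    (Filter.Eventually.of_forall fun n => zero_le) key
end

section
/- Let 0 < p < 1, q = 1 − p, s > 0, r = 1/q, a > 0, c_k = 1 for k < 0 and c_k = 0 for k ≥ 0, and define g(t) = i·t·s·q + Σ_{k=−∞}^{∞} ∫_{s·r^{k−1}}^{s·r^k} q^k·(e^{i·t·x} − 1 − i·t·x·c_k)·(dx/x). Then for every integer m, g(t·q^m) = q^m·(g(t) + i·t·s·m·p). -/
open Complex

lemma pet_norm_exp_sub_one (t x : ℝ) : ‖Complex.exp (Complex.I*t*x) - 1‖ ≤ 2 := by
  have h : (Complex.I*(t:ℂ)*(x:ℂ)) = ((t*x : ℝ):ℂ)*Complex.I := by push_cast; ring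
  rw [h]
  calc ‖Complex.exp (((t*x:ℝ):ℂ)*Complex.I) - 1‖
      ≤ ‖Complex.exp (((t*x:ℝ):ℂ)*Complex.I)‖ + ‖(1:ℂ)‖ := norm_sub_le _ _
    _ ≤ 2 := by rw [Complex.norm_exp_ofReal_mul_I]; norm_num

lemma pet_norm_exp_quad (t x : ℝ) :
    ‖Complex.exp (Complex.I*t*x) - 1 - Complex.I*t*x‖ ≤ 3*(t*x)^2 := by
  have h : (Complex.I*(t:ℂ)*(x:ℂ)) = ((t*x : ℝ):ℂ)*Complex.I := by push_cast; ring
  rw [h]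
  set u := t*x with hu
  have habs : ‖(((u:ℝ):ℂ)*Complex.I)‖ = |u| := by
    simp
  rcases le_or_gt (|u|) 1 with h1 | h1
  · have := Complex.norm_exp_sub_one_sub_id_le (x := ((u:ℝ):ℂ)*Complex.I) (by rw [habs]; exact h1)
    calc ‖(Complex.exp (↑u*I) - 1 - ↑u*I)‖ ≤ ‖(↑u*I)‖ ^ 2 := this
      _ = u^2 := by rw [habs, _root_.sq_abs]
      _ ≤ 3*u^2 := by nlinarith [sq_nonneg u]
  · have h2 : ‖Complex.exp (((u:ℝ):ℂ)*Complex.I) - 1 - ((u:ℝ):ℂ)*Complex.I‖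
        ≤ ‖Complex.exp (((u:ℝ):ℂ)*Complex.I) - 1‖ + ‖((u:ℝ):ℂ)*Complex.I‖ := norm_sub_le _ _
    have h3 : ‖Complex.exp (((u:ℝ):ℂ)*Complex.I) - 1‖ ≤ 2 := by
      calc ‖Complex.exp (((u:ℝ):ℂ)*Complex.I) - 1‖
          ≤ ‖Complex.exp (((u:ℝ):ℂ)*Complex.I)‖ + ‖(1:ℂ)‖ := norm_sub_le _ _
        _ ≤ 2 := by rw [Complex.norm_exp_ofReal_mul_I]; norm_num
    have h4 : ‖((u:ℝ):ℂ)*Complex.I‖ = |u| := by exact habs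
    have : |u| ≤ u^2 := by nlinarith [abs_nonneg u, _root_.sq_abs u]
    nlinarith [abs_nonneg u, _root_.sq_abs u, h2, h3]

lemma pet_summable_indicator (m : ℤ) :
    Summable (fun j:ℤ => ((if j < 0 then (1:ℂ) else 0) - (if j + m < 0 then 1 else 0))) := by
  apply summable_of_ne_finset_zero (s := Finset.Ico (-m) 0 ∪ Finset.Ico 0 (-m))
  intro j hj
  simp only [Finset.mem_union, Finset.mem_Ico, not_or, not_and_or, not_lt, not_le] at hj
  rcases lt_or_ge j 0 with hj0 | hj0
  · have : j + m < 0 := by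
      rcases hj.1 with h | h
      · linarith
      · linarith
    simp [hj0, this]
  · have : ¬ (j + m < 0) := by
      rcases hj.2 with h | h
      · push_neg; linarith
      · push_neg; linarith
    simp [not_lt.mpr hj0, this]

lemma pet_tsum_indicator (m : ℤ) :
    ∑' j:ℤ, ((if j < 0 then (1:ℂ) else 0) - (if j + m < 0 then 1 else 0)) = m := by
  rcases le_or_gt 0 m with hm | hm
  · rw [tsum_eq_sum (s := Finset.Ico (-m) 0)]
    · have : ∀ j ∈ Finset.Ico (-m) 0,
          ((if j < 0 then (1:ℂ) else 0) - (if j + m < 0 then 1 else 0)) = 1 := by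
        intro j hj
        simp only [Finset.mem_Ico] at hj
        have h1 : j < 0 := hj.2
        have h2 : ¬ (j + m < 0) := by push_neg; linarith [hj.1]
        simp [h1, h2]
      rw [Finset.sum_congr rfl this, Finset.sum_const, Int.card_Ico]
      simp only [nsmul_eq_mul, mul_one]
      have hcast : (((0 - -m).toNat : ℕ) : ℂ) = ((0 - -m : ℤ) : ℂ) := by
        rw [← Int.cast_natCast, Int.toNat_of_nonneg (by linarith)]
      rw [hcast]; push_cast; ring
    · intro j hj
      simp only [Finset.mem_Ico, not_and_or, not_lt, not_le] at hj
      rcases lt_or_ge j 0 with hj0 | hj0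
      · have : j + m < 0 := by rcases hj with h | h <;> linarith
        simp [hj0, this]
      · have : ¬ (j + m < 0) := by push_neg; rcases hj with h | h <;> linarith
        simp [not_lt.mpr hj0, this]
  · rw [tsum_eq_sum (s := Finset.Ico 0 (-m))]
    · have : ∀ j ∈ Finset.Ico 0 (-m),
          ((if j < 0 then (1:ℂ) else 0) - (if j + m < 0 then 1 else 0)) = -1 := by
        intro j hj
        simp only [Finset.mem_Ico] at hj
        have h1 : ¬ (j < 0) := by push_neg; exact hj.1
        have h2 : j + m < 0 := by linarith [hj.2]
        simp [h1, h2]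
      rw [Finset.sum_congr rfl this, Finset.sum_const, Int.card_Ico]
      simp only [nsmul_eq_mul, mul_neg, mul_one]
      have hcast : (((-m - 0).toNat : ℕ) : ℂ) = ((-m - 0 : ℤ) : ℂ) := by
        rw [← Int.cast_natCast, Int.toNat_of_nonneg (by linarith)]
      rw [hcast]; push_cast; ring
    · intro j hj
      simp only [Finset.mem_Ico, not_and_or, not_lt, not_le] at hj
      rcases lt_or_ge j 0 with hj0 | hj0
      · have : j + m < 0 := by rcases hj with h | h <;> linarith
        simp [hj0, this]
      · have : ¬ (j + m < 0) := by push_neg; rcases hj with h | h <;> linarith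
        simp [not_lt.mpr hj0, this]

theorem petersburg_U_levy_exponent_semistable
    (p q s r a : ℝ) (hp : 0 < p) (hp1 : p < 1) (hq : q = 1 - p) (hs : 0 < s)
    (hr : r = 1 / q) (ha : 0 < a) (g : ℝ → ℂ)
    (hg : ∀ t : ℝ, g t =
      Complex.I * t * s * q +
      ∑' k : ℤ,
        ∫ x in (s * r ^ (k - 1))..(s * r ^ k),
          (q : ℂ) ^ k *
            (Complex.exp (Complex.I * t * x) - 1
              - Complex.I * t * x * (if k < 0 then 1 else 0)) / x) :
    ∀ (t : ℝ) (m : ℤ),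
      g (t * q ^ m) = (q : ℂ) ^ m * (g t + Complex.I * t * s * m * p) := by
  intro t m
  -- basic positivity facts
  have hq0 : 0 < q := by rw [hq]; linarith
  have hq1 : q < 1 := by rw [hq]; linarith
  have hqne : q ≠ 0 := ne_of_gt hq0
  have hr0 : 0 < r := by rw [hr]; positivity
  have hrne : r ≠ 0 := ne_of_gt hr0
  have hr1 : 1 < r := by rw [hr, lt_div_iff₀ hq0, one_mul]; exact hq1
  have hqr : q * r = 1 := by rw [hr]; field_simp
  have hqinv : q = r⁻¹ := by rw [hr, one_div, inv_inv]
  have hqmne : (q:ℝ)^m ≠ 0 := zpow_ne_zero m hqne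
  have hqrz : ∀ k : ℤ, q^k * r^k = 1 := fun k => by rw [← mul_zpow, hqr, one_zpow]
  have hscale : ∀ j : ℤ, q^m * (s * r^j) = s * r^(j - m) := by
    intro j
    rw [hqinv, inv_zpow, ← zpow_neg, show j - m = -m + j by ring, zpow_add₀ hrne]
    ring
  have hpos : ∀ j : ℤ, 0 < s * r^j := fun j => by positivity
  have hsplit : ∀ j : ℤ, s * r^j = (s * r^(j-1)) * r := by
    intro j
    rw [mul_assoc, ← zpow_add_one₀ hrne, sub_add_cancel]
  have hab : ∀ j : ℤ, s * r^(j-1) ≤ s * r^j := by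
    intro j
    rw [hsplit j]
    nlinarith [hpos (j-1)]
  -- interval integrability of the base integrand
  have hInt : ∀ (u : ℝ) (c : ℂ) (j : ℤ),
      IntervalIntegrable (fun x:ℝ => (Complex.exp (Complex.I*u*x) - 1 - Complex.I*u*x*c)/(x:ℂ))
        MeasureTheory.volume (s*r^(j-1)) (s*r^j) := by
    intro u c j
    apply ContinuousOn.intervalIntegrable
    apply ContinuousOn.div
    · fun_prop
    · fun_prop
    · intro x hx
      rw [Set.uIcc_of_le (hab j)] at hx
      have hx0 : 0 < x := lt_of_lt_of_le (hpos (j-1)) hx.1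
      exact_mod_cast ne_of_gt hx0

  -- rewrite g pulling the constant out of the integral
  have hgF : ∀ u : ℝ, g u = Complex.I * u * s * q +
      ∑' k : ℤ, ((q:ℂ)^k * ∫ x in (s*r^(k-1))..(s*r^k),
        (Complex.exp (Complex.I*u*x) - 1 - Complex.I*u*x*(if k < 0 then (1:ℂ) else 0))/(x:ℂ)) := by
    intro u
    rw [hg u]
    congr 1
    apply tsum_congr
    intro k
    simp only [mul_div_assoc]
    rw [intervalIntegral.integral_const_mul]
  -- change of variables
  have hCV : ∀ (c : ℂ) (k : ℤ),
      (∫ x in (s*r^(k-1))..(s*r^k),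
        (Complex.exp (Complex.I*(t*q^m:ℝ)*x) - 1 - Complex.I*(t*q^m:ℝ)*x*c)/(x:ℂ))
      = ∫ x in (s*r^(k-1-m))..(s*r^(k-m)),
        (Complex.exp (Complex.I*t*x) - 1 - Complex.I*t*x*c)/(x:ℂ) := by
    intro c k
    have hpt : ∀ x : ℝ,
        (Complex.exp (Complex.I*(t*q^m:ℝ)*x) - 1 - Complex.I*(t*q^m:ℝ)*x*c)/(x:ℂ)
        = (q^m : ℝ) • ((fun y:ℝ => (Complex.exp (Complex.I*t*y) - 1 - Complex.I*t*y*c)/(y:ℂ))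
            ((q^m:ℝ) * x)) := by
      intro x
      rcases eq_or_ne x 0 with hx | hx
      · simp [hx]
      · simp only
        have harg : Complex.I*((t*q^m:ℝ):ℂ)*(x:ℂ) = Complex.I*(t:ℂ)*((q^m*x:ℝ):ℂ) := by
          push_cast; ring
        rw [harg, Complex.real_smul]
        have hwx : ((q^m*x:ℝ):ℂ) = ((q^m:ℝ):ℂ)*(x:ℂ) := by push_cast; ring
        rw [hwx, mul_div_assoc', mul_div_mul_left _ _
          (by exact_mod_cast hqmne : ((q^m:ℝ):ℂ) ≠ 0)]
    simp only [hpt]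
    rw [intervalIntegral.integral_smul]
    have hcomp := intervalIntegral.smul_integral_comp_mul_left
      (a := s*r^(k-1)) (b := s*r^k)
      (f := fun y:ℝ => (Complex.exp (Complex.I*t*y) - 1 - Complex.I*t*y*c)/(y:ℂ)) (q^m)
    rw [hscale (k-1), hscale k] at hcomp
    exact hcomp
  -- splitting off the centering difference
  have hHsplit : ∀ j : ℤ,
      ((q:ℂ)^j * ∫ x in (s*r^(j-1))..(s*r^j),
        (Complex.exp (Complex.I*t*x) - 1 - Complex.I*t*x*(if j+m < 0 then (1:ℂ) else 0))/(x:ℂ))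
      = ((q:ℂ)^j * ∫ x in (s*r^(j-1))..(s*r^j),
          (Complex.exp (Complex.I*t*x) - 1 - Complex.I*t*x*(if j < 0 then (1:ℂ) else 0))/(x:ℂ))
        + Complex.I*t*s*p*((if j < 0 then (1:ℂ) else 0) - (if j+m < 0 then 1 else 0)) := by
    intro j
    set c : ℂ := if j < 0 then 1 else 0 with hc
    set c' : ℂ := if j+m < 0 then 1 else 0 with hc'
    have hconst : (∫ x in (s*r^(j-1))..(s*r^j),
          ((Complex.exp (Complex.I*t*x) - 1 - Complex.I*t*x*c')/(x:ℂ)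
            - (Complex.exp (Complex.I*t*x) - 1 - Complex.I*t*x*c)/(x:ℂ)))
        = ∫ _x in (s*r^(j-1))..(s*r^j), (Complex.I*t*(c-c') : ℂ) := by
      apply intervalIntegral.integral_congr
      intro x hx
      rw [Set.uIcc_of_le (hab j)] at hx
      have hx0 : (x:ℂ) ≠ 0 := by
        exact_mod_cast ne_of_gt (lt_of_lt_of_le (hpos (j-1)) hx.1)
      field_simp
      ring
    have hdiff : (∫ x in (s*r^(j-1))..(s*r^j),
          (Complex.exp (Complex.I*t*x) - 1 - Complex.I*t*x*c')/(x:ℂ))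
        - (∫ x in (s*r^(j-1))..(s*r^j),
          (Complex.exp (Complex.I*t*x) - 1 - Complex.I*t*x*c)/(x:ℂ))
        = ((s*r^j) - (s*r^(j-1))) • (Complex.I*t*(c - c')) := by
      rw [← intervalIntegral.integral_sub (hInt t c' j) (hInt t c j), hconst,
        intervalIntegral.integral_const]
    have hlen : (q:ℝ)^j * ((s*r^j) - (s*r^(j-1))) = s*p := by
      have h1 := hqrz j
      have h2 : q^j * r^(j-1) = q := by
        rw [zpow_sub_one₀ hrne, ← mul_assoc, hqrz j, one_mul, hqinv]
      have h3 : q^j*((s*r^j) - (s*r^(j-1))) = s*(q^j*r^j) - s*(q^j*r^(j-1)) := by ring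
      rw [h3, h1, h2, hq]; ring
    have hq_len : ((q:ℂ)^j) * (((s*r^j) - (s*r^(j-1)) : ℝ):ℂ) = ((s*p : ℝ):ℂ) := by
      rw [← hlen]; push_cast; ring
    calc (q:ℂ)^j * ∫ x in (s*r^(j-1))..(s*r^j),
          (Complex.exp (Complex.I*t*x) - 1 - Complex.I*t*x*c')/(x:ℂ)
        = (q:ℂ)^j * ((∫ x in (s*r^(j-1))..(s*r^j),
            (Complex.exp (Complex.I*t*x) - 1 - Complex.I*t*x*c)/(x:ℂ))
          + (((s*r^j) - (s*r^(j-1)) : ℝ):ℂ) * (Complex.I*t*(c - c'))) := by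
          rw [eq_add_of_sub_eq hdiff, Complex.real_smul]
          ring
      _ = (q:ℂ)^j * (∫ x in (s*r^(j-1))..(s*r^j),
            (Complex.exp (Complex.I*t*x) - 1 - Complex.I*t*x*c)/(x:ℂ))
          + ((q:ℂ)^j * (((s*r^j) - (s*r^(j-1)) : ℝ):ℂ)) * (Complex.I*t*(c - c')) := by
          ring
      _ = ((q:ℂ)^j * ∫ x in (s*r^(j-1))..(s*r^j),
            (Complex.exp (Complex.I*t*x) - 1 - Complex.I*t*x*c)/(x:ℂ))
          + Complex.I*t*s*p*(c - c') := by
          rw [hq_len]; push_cast; ring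
  -- summability of the series for g t
  have hnormq : ∀ k : ℤ, ‖(q:ℂ)^k‖ = q^k := by
    intro k
    rw [norm_zpow, Complex.norm_real, Real.norm_of_nonneg hq0.le]
  have hb1 : ∀ k : ℤ, ¬ (k < 0) →
      ‖(q:ℂ)^k * ∫ x in (s*r^(k-1))..(s*r^k),
        (Complex.exp (Complex.I*t*x) - 1 - Complex.I*t*x*(if k < 0 then (1:ℂ) else 0))/(x:ℂ)‖
      ≤ (2*(r-1))*q^k := by
    intro k hk
    rw [norm_mul, hnormq k]
    have hC : ∀ x ∈ Set.uIoc (s*r^(k-1)) (s*r^k),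
        ‖(Complex.exp (Complex.I*t*x) - 1 - Complex.I*t*x*(if k < 0 then (1:ℂ) else 0))/(x:ℂ)‖
        ≤ 2/(s*r^(k-1)) := by
      intro x hx
      rw [Set.uIoc_of_le (hab k)] at hx
      have hx0 : 0 < x := lt_trans (hpos (k-1)) hx.1
      rw [if_neg hk, mul_zero, sub_zero, norm_div]
      have hxn : ‖(x:ℂ)‖ = x := by rw [Complex.norm_real, Real.norm_of_nonneg hx0.le]
      rw [hxn]
      exact div_le_div₀ (by norm_num) (pet_norm_exp_sub_one t x) (hpos (k-1)) (le_of_lt hx.1)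
    have hIb := intervalIntegral.norm_integral_le_of_norm_le_const hC
    have habs2 : |s*r^k - s*r^(k-1)| = s*r^(k-1)*(r-1) := by
      rw [_root_.abs_of_nonneg (by linarith [hab k] : (0:ℝ) ≤ s*r^k - s*r^(k-1))]
      rw [hsplit k]; ring
    rw [habs2] at hIb
    have hqk : (0:ℝ) < q^k := zpow_pos hq0 k
    calc q^k * ‖∫ x in (s*r^(k-1))..(s*r^k),
          (Complex.exp (Complex.I*t*x) - 1 - Complex.I*t*x*(if k < 0 then (1:ℂ) else 0))/(x:ℂ)‖
        ≤ q^k * (2/(s*r^(k-1)) * (s*r^(k-1)*(r-1))) := by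
          exact mul_le_mul_of_nonneg_left hIb (le_of_lt hqk)
      _ = (2*(r-1))*q^k := by
          field_simp
  have hb2 : ∀ k : ℤ, k < 0 →
      ‖(q:ℂ)^k * ∫ x in (s*r^(k-1))..(s*r^k),
        (Complex.exp (Complex.I*t*x) - 1 - Complex.I*t*x*(if k < 0 then (1:ℂ) else 0))/(x:ℂ)‖
      ≤ (3*t^2*s^2*(r-1))*r^(k-1) := by
    intro k hk
    rw [norm_mul, hnormq k]
    have hC : ∀ x ∈ Set.uIoc (s*r^(k-1)) (s*r^k),
        ‖(Complex.exp (Complex.I*t*x) - 1 - Complex.I*t*x*(if k < 0 then (1:ℂ) else 0))/(x:ℂ)‖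
        ≤ 3*t^2*(s*r^k) := by
      intro x hx
      rw [Set.uIoc_of_le (hab k)] at hx
      have hx0 : 0 < x := lt_trans (hpos (k-1)) hx.1
      rw [if_pos hk, mul_one, norm_div]
      have hxn : ‖(x:ℂ)‖ = x := by rw [Complex.norm_real, Real.norm_of_nonneg hx0.le]
      rw [hxn]
      calc ‖Complex.exp (Complex.I*t*x) - 1 - Complex.I*t*x‖ / x
          ≤ (3*(t*x)^2)/x := div_le_div₀ (by positivity) (pet_norm_exp_quad t x) hx0 le_rfl
        _ = 3*t^2*x := by field_simp
        _ ≤ 3*t^2*(s*r^k) := by nlinarith [hx.2, sq_nonneg t, hx0]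
    have hIb := intervalIntegral.norm_integral_le_of_norm_le_const hC
    have habs2 : |s*r^k - s*r^(k-1)| = s*r^(k-1)*(r-1) := by
      rw [_root_.abs_of_nonneg (by linarith [hab k] : (0:ℝ) ≤ s*r^k - s*r^(k-1))]
      rw [hsplit k]; ring
    rw [habs2] at hIb
    have hqk : (0:ℝ) < q^k := zpow_pos hq0 k
    calc q^k * ‖∫ x in (s*r^(k-1))..(s*r^k),
          (Complex.exp (Complex.I*t*x) - 1 - Complex.I*t*x*(if k < 0 then (1:ℂ) else 0))/(x:ℂ)‖
        ≤ q^k * (3*t^2*(s*r^k) * (s*r^(k-1)*(r-1))) := by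
          exact mul_le_mul_of_nonneg_left hIb (le_of_lt hqk)
      _ = (3*t^2*s^2*(r-1))*((q^k*r^k)*r^(k-1)) := by ring
      _ = (3*t^2*s^2*(r-1))*r^(k-1) := by rw [hqrz k, one_mul]
  have hrq : ∀ j : ℕ, r^(-(j:ℤ)) = q^j := by
    intro j
    rw [zpow_neg, zpow_natCast, hqinv, inv_pow]
  have hsumF : Summable (fun k : ℤ => (q:ℂ)^k * ∫ x in (s*r^(k-1))..(s*r^k),
      (Complex.exp (Complex.I*t*x) - 1 - Complex.I*t*x*(if k < 0 then (1:ℂ) else 0))/(x:ℂ)) := by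
    apply Summable.of_nat_of_neg
    · apply Summable.of_norm_bounded (g := fun n:ℕ => (2*(r-1))*q^n)
      · exact (summable_geometric_of_lt_one hq0.le hq1).mul_left _
      · intro n
        have h := hb1 (n:ℤ) (by exact_mod_cast not_lt.mpr (Int.ofNat_nonneg n))
        rw [zpow_natCast] at h
        exact h
    · apply Summable.of_norm_bounded
        (g := fun n:ℕ => (2*(r-1) + 3*t^2*s^2*(r-1)/r)*q^n)
      · exact (summable_geometric_of_lt_one hq0.le hq1).mul_left _
      · intro n
        have hnn : (0:ℝ) ≤ 3*t^2*s^2*(r-1)/r :=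
          div_nonneg (mul_nonneg (mul_nonneg (by positivity) (sq_nonneg s))
            (by linarith)) hr0.le
        have h2r : (0:ℝ) ≤ 2*(r-1) := by linarith
        cases n with
        | zero =>
          simp only [Nat.cast_zero, neg_zero, pow_zero, mul_one]
          have h := hb1 0 (by norm_num)
          refine le_trans h ?_
          rw [zpow_zero, mul_one]
          linarith
        | succ nn =>
          have hneg : (-((nn+1:ℕ):ℤ)) < 0 := by
            have : (0:ℤ) < ((nn+1:ℕ):ℤ) := by exact_mod_cast Nat.succ_pos nn
            linarith
          have h := hb2 (-((nn+1:ℕ):ℤ)) hneg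
          have hexp : (-((nn+1:ℕ):ℤ)) - 1 = -(((nn+2:ℕ)):ℤ) := by push_cast; ring
          have h' : 3*t^2*s^2*(r-1)*r^((-((nn+1:ℕ):ℤ))-1)
              = 3*t^2*s^2*(r-1)*q^(nn+2) := by rw [hexp, hrq (nn+2)]
          rw [h'] at h
          refine le_trans h ?_
          have hmono : q^(nn+2) ≤ q^(nn+1) :=
            pow_le_pow_of_le_one hq0.le hq1.le (by omega)
          have hc1 : (0:ℝ) ≤ 3*t^2*s^2*(r-1) :=
            mul_nonneg (mul_nonneg (by positivity) (sq_nonneg s)) (by linarith)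
          have key : (3*t^2*s^2*(r-1))*q^(nn+2) ≤ (3*t^2*s^2*(r-1)/r)*q^(nn+1) := by
            rw [div_mul_eq_mul_div, le_div_iff₀ hr0]
            calc (3*t^2*s^2*(r-1))*q^(nn+2)*r = (3*t^2*s^2*(r-1))*q^(nn+1)*(q*r) := by ring
              _ = (3*t^2*s^2*(r-1))*q^(nn+1) := by rw [hqr, mul_one]
              _ ≤ (3*t^2*s^2*(r-1))*q^(nn+1) := le_rfl
          have hq1n : (0:ℝ) ≤ q^(nn+1) := by positivity
          calc (3*t^2*s^2*(r-1))*q^(nn+2)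
              ≤ (3*t^2*s^2*(r-1)/r)*q^(nn+1) := key
            _ ≤ (2*(r-1) + 3*t^2*s^2*(r-1)/r)*q^(nn+1) := by nlinarith
  -- summability of the correction terms
  have hsumd : Summable (fun j : ℤ =>
      Complex.I*(t:ℂ)*(s:ℂ)*(p:ℂ)*((if j < 0 then (1:ℂ) else 0) - (if j+m < 0 then 1 else 0))) :=
    (pet_summable_indicator m).mul_left _
  -- assemble
  rw [hgF (t*q^m), hgF t]
  have e1 : ∀ k : ℤ,
      ((q:ℂ)^k * ∫ x in (s*r^(k-1))..(s*r^k),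
        (Complex.exp (Complex.I*(t*q^m:ℝ)*x) - 1
          - Complex.I*(t*q^m:ℝ)*x*(if k < 0 then (1:ℂ) else 0))/(x:ℂ))
      = (q:ℂ)^m * ((fun j : ℤ => (q:ℂ)^j * ∫ x in (s*r^(j-1))..(s*r^j),
          (Complex.exp (Complex.I*t*x) - 1
            - Complex.I*t*x*(if j+m < 0 then (1:ℂ) else 0))/(x:ℂ)) (k - m)) := by
    intro k
    simp only
    rw [hCV _ k]
    rw [← mul_assoc, ← zpow_add₀ (by exact_mod_cast hqne : (q:ℂ) ≠ 0), add_sub_cancel]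
    rw [show (k:ℤ) - m - 1 = k - 1 - m by ring, show (k:ℤ) - m + m = k by ring]
  have step1 : (∑' k : ℤ, ((q:ℂ)^k * ∫ x in (s*r^(k-1))..(s*r^k),
        (Complex.exp (Complex.I*(t*q^m:ℝ)*x) - 1
          - Complex.I*(t*q^m:ℝ)*x*(if k < 0 then (1:ℂ) else 0))/(x:ℂ)))
      = (q:ℂ)^m * ∑' j : ℤ, ((q:ℂ)^j * ∫ x in (s*r^(j-1))..(s*r^j),
        (Complex.exp (Complex.I*t*x) - 1
          - Complex.I*t*x*(if j+m < 0 then (1:ℂ) else 0))/(x:ℂ)) := by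
    rw [tsum_congr e1, tsum_mul_left]
    congr 1
    have heq := Equiv.tsum_eq (Equiv.subRight m)
      (fun j : ℤ => (q:ℂ)^j * ∫ x in (s*r^(j-1))..(s*r^j),
        (Complex.exp (Complex.I*t*x) - 1
          - Complex.I*t*x*(if j+m < 0 then (1:ℂ) else 0))/(x:ℂ))
    simpa [Equiv.subRight_apply] using heq
  rw [step1]
  have step2 : (∑' j : ℤ, ((q:ℂ)^j * ∫ x in (s*r^(j-1))..(s*r^j),
        (Complex.exp (Complex.I*t*x) - 1
          - Complex.I*t*x*(if j+m < 0 then (1:ℂ) else 0))/(x:ℂ)))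
      = (∑' j : ℤ, ((q:ℂ)^j * ∫ x in (s*r^(j-1))..(s*r^j),
        (Complex.exp (Complex.I*t*x) - 1
          - Complex.I*t*x*(if j < 0 then (1:ℂ) else 0))/(x:ℂ)))
        + Complex.I*(t:ℂ)*(s:ℂ)*(p:ℂ)*(m:ℂ) := by
    rw [tsum_congr hHsplit, Summable.tsum_add hsumF hsumd, tsum_mul_left, pet_tsum_indicator m]
  rw [step2]
  push_cast
  ring
end

section
/- Let 0 < p < 1, q = 1 − p, s, r > 0 with r > 1, and let T be geometric with P(T = k) = p·q^(k−1). Define V = s·r^(T−1) − p·s·(r^T − 1)/(r − 1) (net gain: payoff minus accumulated fees p·s·r^(j−1) for rounds j = 1,…,T, where the game stops at round T ≤ n with payoff, or the fees up to round n are lost if T > n). For the truncated game with horizon n, define Vₙ = s·r^(T−1) − p·s·(r^T − 1)/(r − 1) if T ≤ n, and Vₙ = −p·s·(r^n − 1)/(r − 1) if T > n. Then E[Vₙ] = 0, i.e., the truncated game is fair. -/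
open MeasureTheory ProbabilityTheory

lemma petersburg_geom_sum_aux (p : ℝ) (n : ℕ) :
    ∑ k ∈ Finset.range n, p * (1 - p) ^ k = 1 - (1 - p) ^ n := by
  induction n with
  | zero => simp
  | succ m ih => rw [Finset.sum_range_succ, ih]; ring

lemma petersburg_main_sum_aux (p s r : ℝ) (hr : r ≠ 1) (n : ℕ) :
    ∑ k ∈ Finset.range n,
      (s * r ^ k - p * s * (r ^ (k + 1) - 1) / (r - 1)) * (p * (1 - p) ^ k)
      = p * s * (r ^ n - 1) / (r - 1) * (1 - p) ^ n := by
  have h : r - 1 ≠ 0 := sub_ne_zero.2 hr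
  induction n with
  | zero => simp
  | succ m ih =>
    rw [Finset.sum_range_succ, ih]
    field_simp
    ring

theorem petersburg_truncated_game_fair
    {Ω : Type*} [MeasureSpace Ω] [IsProbabilityMeasure (ℙ : Measure Ω)]
    (T : Ω → ℕ) (hT : Measurable T) (p q s r : ℝ) (n : ℕ)
    (hp : 0 < p) (hp1 : p < 1) (hq : q = 1 - p) (hs : 0 < s) (hr : 1 < r)
    (hlaw : ∀ k : ℕ, ℙ {ω | T ω = k + 1} = ENNReal.ofReal (p * q ^ k))
    (V : Ω → ℝ)
    (hV : ∀ ω, V ω =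
      if T ω ≤ n then s * r ^ (T ω - 1) - p * s * (r ^ T ω - 1) / (r - 1)
      else -(p * s * (r ^ n - 1) / (r - 1))) :
    ∫ ω, V ω ∂ℙ = 0 := by
  subst hq
  have hq0 : (0:ℝ) ≤ 1 - p := by linarith
  have hq1 : (1:ℝ) - p < 1 := by linarith
  have hr1 : r - 1 ≠ 0 := sub_ne_zero.2 (ne_of_gt hr)
  set c : ℝ := -(p * s * (r ^ n - 1) / (r - 1)) with hc
  set F : ℕ → ℝ := fun k =>
    if k ≤ n then s * r ^ (k - 1) - p * s * (r ^ k - 1) / (r - 1) else c with hF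
  have hmeas : ∀ k : ℕ, MeasurableSet {ω | T ω = k} :=
    fun k => hT (measurableSet_singleton k)
  -- rewrite V as constant plus finite sum of indicators
  have hVeq : ∀ ω, V ω = c + ∑ k ∈ Finset.range (n + 1),
      Set.indicator {ω' | T ω' = k} (fun _ => F k - c) ω := by
    intro ω
    rw [hV]
    by_cases h : T ω ≤ n
    · rw [Finset.sum_eq_single_of_mem (T ω) (Finset.mem_range.2 (by omega))]
      · simp only [Set.indicator, Set.mem_setOf_eq, if_pos rfl, hF, if_pos h, if_true]
        ring
      · intro b _ hb
        simp [Set.indicator, Set.mem_setOf_eq, Ne.symm hb]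
    · have hz : ∀ k ∈ Finset.range (n + 1),
          Set.indicator {ω' | T ω' = k} (fun _ => F k - c) ω = 0 := by
        intro k hk
        have : T ω ≠ k := by
          have := Finset.mem_range.1 hk; omega
        simp [Set.indicator, this]
      rw [if_neg h, Finset.sum_eq_zero hz, add_zero]
  -- probability that T = 0 is zero
  have hT0 : ℙ {ω | T ω = 0} = 0 := by
    have hdisj : Pairwise (Function.onFun Disjoint fun k : ℕ => {ω | T ω = k + 1}) := by
      intro i j hij
      simp only [Function.onFun, Set.disjoint_left, Set.mem_setOf_eq]
      intro ω h1 h2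
      omega
    have hU : ℙ (⋃ k : ℕ, {ω | T ω = k + 1}) = 1 := by
      rw [measure_iUnion hdisj (fun k => hmeas (k + 1))]
      have hsummable : Summable (fun k : ℕ => p * (1 - p) ^ k) :=
        (summable_geometric_of_lt_one hq0 hq1).mul_left p
      have hnn : ∀ k : ℕ, 0 ≤ p * (1 - p) ^ k :=
        fun k => mul_nonneg hp.le (pow_nonneg hq0 k)
      calc ∑' k : ℕ, ℙ {ω | T ω = k + 1}
          = ∑' k : ℕ, ENNReal.ofReal (p * (1 - p) ^ k) := by
            exact tsum_congr fun k => hlaw k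
        _ = ENNReal.ofReal (∑' k : ℕ, p * (1 - p) ^ k) :=
            (ENNReal.ofReal_tsum_of_nonneg hnn hsummable).symm
        _ = 1 := by
            rw [tsum_mul_left, tsum_geometric_of_lt_one hq0 hq1]
            have : (1:ℝ) - (1 - p) = p := by ring
            rw [this, mul_inv_cancel₀ (ne_of_gt hp)]
            simp
    have hsub : {ω | T ω = 0} ⊆ (⋃ k : ℕ, {ω | T ω = k + 1})ᶜ := by
      intro ω hω
      simp only [Set.mem_compl_iff, Set.mem_iUnion, Set.mem_setOf_eq] at hω ⊢
      intro ⟨k, hk⟩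
      omega
    refine le_antisymm ?_ zero_le
    calc ℙ {ω | T ω = 0} ≤ ℙ (⋃ k : ℕ, {ω | T ω = k + 1})ᶜ := measure_mono hsub
      _ = 0 := by
          rw [measure_compl (MeasurableSet.iUnion fun k => hmeas (k + 1))
            (measure_ne_top _ _), hU, measure_univ, tsub_self]
  -- integrate
  have hint : ∀ k : ℕ, Integrable
      (fun ω => Set.indicator {ω' | T ω' = k} (fun _ => F k - c) ω) ℙ :=
    fun k => (integrable_const (F k - c)).indicator (hmeas k)
  have hI : ∫ ω, V ω ∂ℙ = c + ∑ k ∈ Finset.range (n + 1),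
      (ℙ {ω | T ω = k}).toReal * (F k - c) := by
    rw [integral_congr_ae (Filter.Eventually.of_forall hVeq),
      integral_add (integrable_const c) (integrable_finset_sum _ fun k _ => hint k),
      integral_const, integral_finset_sum _ fun k _ => hint k]
    simp only [measure_univ, probReal_univ, ENNReal.toReal_one, smul_eq_mul, one_mul]
    congr 1
    refine Finset.sum_congr rfl fun k _ => ?_
    rw [integral_indicator_const (F k - c) (hmeas k), smul_eq_mul, measureReal_def]
  rw [hI, Finset.sum_range_succ']
  have hval : ∀ k : ℕ, (ℙ {ω | T ω = k + 1}).toReal = p * (1 - p) ^ k := by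
    intro k
    rw [hlaw k, ENNReal.toReal_ofReal (mul_nonneg hp.le (pow_nonneg hq0 k))]
  rw [hT0]
  simp only [ENNReal.toReal_zero, zero_mul, add_zero]
  have hterm : ∀ k ∈ Finset.range n,
      (ℙ {ω | T ω = k + 1}).toReal * (F (k + 1) - c)
      = (s * r ^ k - p * s * (r ^ (k + 1) - 1) / (r - 1)) * (p * (1 - p) ^ k)
        - c * (p * (1 - p) ^ k) := by
    intro k hk
    have hk' : k + 1 ≤ n := by have := Finset.mem_range.1 hk; omega
    rw [hval k, hF]
    simp only [if_pos hk', Nat.add_sub_cancel]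
    ring
  rw [Finset.sum_congr rfl hterm, Finset.sum_sub_distrib,
    petersburg_main_sum_aux p s r (ne_of_gt hr) n, ← Finset.mul_sum,
    petersburg_geom_sum_aux p n, hc]
  ring
end

section
/- Let X, X₁, X₂, … be i.i.d. with P(X = s·r^(k−1)) = p·q^(k−1), k ≥ 1, where 0 < p < 1, q = 1 − p, s > 0, r = 1/q, and Sₙ = X₁ + ⋯ + Xₙ. Then almost surely limsup_{n→∞} Sₙ/(n·log_r n) = +∞. -/
open MeasureTheory ProbabilityTheory Filter

lemma aux_not_summable_one_div_nat_log :
    ¬ Summable (fun n : ℕ => 1 / (((n : ℝ) + 2) * Real.log ((n : ℝ) + 2))) := by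
  intro hsum
  set g : ℕ → ℝ := fun n => 1 / (max (n : ℝ) 2 * Real.log (max (n : ℝ) 2)) with hg
  have hM : ∀ n : ℕ, (2:ℝ) ≤ max (n : ℝ) 2 := fun n => le_max_right _ _
  have hMpos : ∀ n : ℕ, 0 < max (n : ℝ) 2 * Real.log (max (n : ℝ) 2) := by
    intro n
    have h2 : (0:ℝ) < Real.log (max (n : ℝ) 2) :=
      Real.log_pos (lt_of_lt_of_le one_lt_two (hM n))
    have h3 : (0:ℝ) < max (n : ℝ) 2 := lt_of_lt_of_le two_pos (hM n)
    positivity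
  have h_nonneg : ∀ n, 0 ≤ g n := fun n => le_of_lt (by simpa [hg] using one_div_pos.2 (hMpos n))
  have h_mono : ∀ ⦃m n : ℕ⦄, 0 < m → m ≤ n → g n ≤ g m := by
    intro m n _ hmn
    refine one_div_le_one_div_of_le (hMpos m) ?_
    have hle : max (m:ℝ) 2 ≤ max (n:ℝ) 2 :=
      max_le_max (by exact_mod_cast hmn) le_rfl
    have hlog : Real.log (max (m:ℝ) 2) ≤ Real.log (max (n:ℝ) 2) :=
      Real.log_le_log (lt_of_lt_of_le two_pos (hM m)) hle
    exact mul_le_mul hle hlog (le_of_lt (Real.log_pos (lt_of_lt_of_le one_lt_two (hM m))))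
      (le_trans (by norm_num) (hM n))
  have hgsum : Summable g := by
    rw [← summable_nat_add_iff 2]
    have he : (fun n : ℕ => g (n + 2)) =
        (fun n : ℕ => 1 / (((n : ℝ) + 2) * Real.log ((n : ℝ) + 2))) := by
      funext n
      simp only [hg]
      rw [show ((n + 2 : ℕ) : ℝ) = (n : ℝ) + 2 by push_cast; ring,
        max_eq_left (le_add_of_nonneg_left (Nat.cast_nonneg n))]
    rw [he]; exact hsum
  have hcond : Summable fun k : ℕ => (2 : ℝ) ^ k * g (2 ^ k) :=
    (summable_condensed_iff_of_nonneg h_nonneg h_mono).2 hgsum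
  have h1 : Summable fun k : ℕ => 1 / (((k:ℝ) + 1) * Real.log 2) := by
    have h0 := (summable_nat_add_iff 1).2 hcond
    have he : (fun k : ℕ => (2:ℝ) ^ (k+1) * g (2 ^ (k+1))) =
        (fun k : ℕ => 1 / (((k:ℝ) + 1) * Real.log 2)) := by
      funext k
      have h2le : (2:ℝ) ≤ (2:ℝ)^(k+1) := by
        calc (2:ℝ) = 2^1 := (pow_one 2).symm
        _ ≤ 2^(k+1) := pow_le_pow_right₀ one_le_two (by omega)
      have hmax : max (((2:ℕ)^(k+1) : ℕ) : ℝ) 2 = ((2:ℝ))^(k+1) := by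
        rw [show (((2:ℕ)^(k+1) : ℕ) : ℝ) = (2:ℝ)^(k+1) by push_cast; ring]
        exact max_eq_left h2le
      simp only [hg, hmax]
      rw [Real.log_pow]
      have hlog2 : (0:ℝ) < Real.log 2 := Real.log_pos one_lt_two
      have hpow : (0:ℝ) < (2:ℝ) ^ (k+1) := by positivity
      push_cast
      field_simp
    rwa [he] at h0
  have h2 : Summable fun k : ℕ => 1 / ((k:ℝ) + 1) := by
    have h0 := h1.mul_left (Real.log 2)
    have he : (fun k : ℕ => Real.log 2 * (1 / (((k:ℝ) + 1) * Real.log 2))) =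
        (fun k : ℕ => 1 / ((k:ℝ) + 1)) := by
      funext k
      have hlog2 : (0:ℝ) < Real.log 2 := Real.log_pos one_lt_two
      field_simp
      try ring
    rwa [he] at h0
  have h3 : Summable (fun n : ℕ => 1 / ((n : ℝ))) := by
    rw [← summable_nat_add_iff 1]
    simpa [Nat.cast_add] using h2
  exact Real.not_summable_one_div_natCast h3

set_option maxHeartbeats 2000000 in
theorem petersburg_limsup_infinite
    {Ω : Type*} [MeasureSpace Ω] [IsProbabilityMeasure (ℙ : Measure Ω)]
    (X : ℕ → Ω → ℝ) (hX : ∀ i, Measurable (X i)) (p q s r : ℝ)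
    (hp : 0 < p) (hp1 : p < 1) (hq : q = 1 - p) (hs : 0 < s) (hr : r = 1 / q)
    (hindep : iIndepFun X ℙ)
    (hlaw : ∀ i, ∀ k : ℕ, ℙ {ω | X i ω = s * r ^ k} = ENNReal.ofReal (p * q ^ k)) :
    ∀ᵐ ω ∂ℙ, ∀ c : ℝ, ∃ᶠ n : ℕ in Filter.atTop,
      c < (∑ i ∈ Finset.range n, X i ω) / (n * Real.logb r n) := by
  have hq0 : 0 < q := by rw [hq]; linarith
  have hq1 : q < 1 := by rw [hq]; linarith
  have hr1 : 1 < r := by rw [hr, lt_div_iff₀ hq0]; linarith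
  have hr0 : 0 < r := lt_trans one_pos hr1
  have hqr : q = r⁻¹ := by rw [hr]; field_simp
  have hlogr : 0 < Real.log r := Real.log_pos hr1
  -- Step A : a.s. every X i is in the support {s * r ^ k}
  have hsupp_ae : ∀ᵐ ω ∂ℙ, ∀ i : ℕ, ∃ k : ℕ, X i ω = s * r ^ k := by
    rw [ae_all_iff]
    intro i
    set U : Set Ω := ⋃ k : ℕ, X i ⁻¹' {s * r ^ k} with hU
    have hUm : MeasurableSet U := MeasurableSet.iUnion fun k => hX i (measurableSet_singleton _)
    have hdisj : Pairwise (Function.onFun Disjoint fun k : ℕ => X i ⁻¹' {s * r ^ k}) := by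
      intro k j hkj
      rw [Function.onFun, Set.disjoint_left]
      intro ω hk hj
      simp only [Set.mem_preimage, Set.mem_singleton_iff] at hk hj
      have h1 : s * r ^ k = s * r ^ j := by rw [← hk, hj]
      have hpow : r ^ k = r ^ j := mul_left_cancel₀ (ne_of_gt hs) h1
      exact hkj ((pow_right_strictMono₀ hr1).injective hpow)
    have hgeo : Summable (fun k : ℕ => p * q ^ k) :=
      (summable_geometric_of_lt_one hq0.le hq1).mul_left p
    have hUmeas : ℙ U = 1 := by
      rw [hU, measure_iUnion hdisj (fun k => hX i (measurableSet_singleton _))]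
      have heq : ∀ k : ℕ, ℙ (X i ⁻¹' {s * r ^ k}) = ENNReal.ofReal (p * q ^ k) := by
        intro k; exact hlaw i k
      simp_rw [heq]
      rw [← ENNReal.ofReal_tsum_of_nonneg (fun k => by positivity) hgeo]
      rw [tsum_mul_left, tsum_geometric_of_lt_one hq0.le hq1]
      rw [show (1 : ℝ) - q = p by rw [hq]; ring]
      rw [mul_inv_cancel₀ (ne_of_gt hp)]
      simp
    have hcompl : ℙ Uᶜ = 0 := by
      rw [measure_compl hUm (measure_ne_top _ _), hUmeas, measure_univ, tsub_self]
    have : ∀ᵐ ω ∂ℙ, ω ∈ U := by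
      rw [eventually_iff, mem_ae_iff]
      simpa using hcompl
    filter_upwards [this] with ω hω
    simpa [hU, Set.mem_iUnion] using hω
  -- The minimal exponents
  have hex : ∀ m n : ℕ, ∃ k : ℕ,
      ((m:ℝ)+1) * ((n:ℝ)+1) * Real.logb r ((n:ℝ)+1) < s * r ^ k := by
    intro m n
    obtain ⟨k, hk⟩ := ((tendsto_pow_atTop_atTop_of_one_lt hr1).eventually_ge_atTop
      ((((m:ℝ)+1) * ((n:ℝ)+1) * Real.logb r ((n:ℝ)+1)) / s + 1)).exists
    refine ⟨k, ?_⟩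
    have := (div_lt_iff₀ hs).1 (show (((m:ℝ)+1) * ((n:ℝ)+1) * Real.logb r ((n:ℝ)+1)) / s < r ^ k
      from lt_of_lt_of_le (by linarith) hk)
    linarith [this]
  have hKex : ∀ m n : ℕ, ∃ k : ℕ,
      (((m:ℝ)+1) * ((n:ℝ)+1) * Real.logb r ((n:ℝ)+1) < s * r ^ k) ∧
      (∀ j, j < k → ¬(((m:ℝ)+1) * ((n:ℝ)+1) * Real.logb r ((n:ℝ)+1) < s * r ^ j)) :=
    fun m n => ⟨Nat.find (hex m n), Nat.find_spec (hex m n),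
      fun j hj => Nat.find_min (hex m n) hj⟩
  choose K hKspec hKmin using hKex
  -- The events
  set A : ℕ → ℕ → Set Ω := fun m n => X n ⁻¹' {s * r ^ K m n} with hA
  have hAm : ∀ m n, MeasurableSet (A m n) := fun m n => hX n (measurableSet_singleton _)
  have hPA : ∀ m n, ℙ (A m n) = ENNReal.ofReal (p * q ^ K m n) := fun m n => hlaw n (K m n)
  have hindepA : ∀ m, iIndepSet (A m) ℙ := by
    intro m
    rw [iIndepSet_iff_meas_biInter (hAm m)]
    intro S
    exact hindep.measure_inter_preimage_eq_mul S (fun i _ => measurableSet_singleton _)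
  -- Divergence of the sum of probabilities
  have hsum_top : ∀ m, (∑' n, ℙ (A m n)) = ⊤ := by
    intro m
    by_contra htop
    have hS : Summable (fun n => p * q ^ K m n) := by
      have := ENNReal.summable_toReal htop
      simp_rw [hPA m] at this
      have heq : (fun n => (ENNReal.ofReal (p * q ^ K m n)).toReal) =
          (fun n => p * q ^ K m n) := by
        funext n; rw [ENNReal.toReal_ofReal (by positivity)]
      rwa [heq] at this
    obtain ⟨E, hE⟩ : ∃ E : ℝ, E = r * ((m:ℝ)+1) / Real.log r + r * s := ⟨_, rfl⟩
    have hE0 : 0 < E := by rw [hE]; positivity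
    -- pointwise lower bound for n + 1
    have hbound : ∀ n : ℕ,
        (p * s / E) * (1 / ((((n:ℝ)) + 2) * Real.log (((n:ℝ)) + 2))) ≤ p * q ^ K m (n+1) := by
      intro n
      obtain ⟨a, ha⟩ : ∃ a : ℝ, a = (n:ℝ) + 2 := ⟨_, rfl⟩
      have ha2 : (2:ℝ) ≤ a := by rw [ha]; linarith [Nat.cast_nonneg (α := ℝ) n]
      have hloga : 0 < Real.log a := Real.log_pos (by linarith)
      have hlogba : 0 ≤ Real.logb r a := Real.logb_nonneg hr1 (by linarith)
      obtain ⟨L, hL⟩ : ∃ L : ℝ, L = ((m:ℝ)+1) * a * Real.logb r a := ⟨_, rfl⟩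
      have hL0 : 0 ≤ L := by rw [hL]; positivity
      have hcast : ((n+1 : ℕ):ℝ) + 1 = a := by rw [ha]; push_cast; ring
      -- s * r ^ K m (n+1) ≤ r * (L + s)
      have hub : s * r ^ K m (n+1) ≤ r * (L + s) := by
        rcases Nat.eq_zero_or_pos (K m (n+1)) with h0 | hpos
        · rw [h0, pow_zero, mul_one]
          nlinarith
        · obtain ⟨j, hj⟩ : ∃ j, K m (n+1) = j + 1 := ⟨K m (n+1) - 1, by omega⟩
          have hmin := hKmin m (n+1) j (by omega)
          push_neg at hmin
          rw [hcast] at hmin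
          have hjL : s * r ^ j ≤ L := by rw [hL]; exact hmin
          calc s * r ^ K m (n+1) = r * (s * r ^ j) := by rw [hj]; ring
          _ ≤ r * L := by nlinarith
          _ ≤ r * (L + s) := by nlinarith
      -- q ^ K = (r ^ K)⁻¹
      have hqK : q ^ K m (n+1) = (r ^ K m (n+1))⁻¹ := by rw [hqr, inv_pow]
      have hrK : (0:ℝ) < r ^ K m (n+1) := by positivity
      have hLs : 0 < L + s := by linarith
      have hq_lb : s / (r * (L + s)) ≤ q ^ K m (n+1) := by
        rw [hqK, div_le_iff₀ (by positivity), inv_mul_eq_div, le_div_iff₀ hrK]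
        exact hub
      -- r * (L + s) ≤ E * (a * log a)
      have haloga : (1:ℝ) ≤ a * Real.log a := by
        have h2 : Real.log 2 ≤ Real.log a := Real.log_le_log two_pos ha2
        nlinarith [Real.log_two_gt_d9]
      have hub2 : r * (L + s) ≤ E * (a * Real.log a) := by
        have hlb : Real.logb r a = Real.log a / Real.log r := (Real.log_div_log).symm
        have h1 : r * L = r * ((m:ℝ)+1) / Real.log r * (a * Real.log a) := by
          rw [hL, hlb]; field_simp
        have h2 : r * s ≤ r * s * (a * Real.log a) := by nlinarith [haloga, mul_pos hr0 hs]
        rw [hE, add_mul, mul_add, h1]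
        nlinarith [h2]
      -- combine
      rw [← ha]
      have key : s / (E * (a * Real.log a)) ≤ q ^ K m (n+1) := by
        refine le_trans ?_ hq_lb
        exact div_le_div_of_nonneg_left hs.le (by positivity) hub2
      have hEa : 0 < E * (a * Real.log a) := by positivity
      calc (p * s / E) * (1 / (a * Real.log a)) = p * (s / (E * (a * Real.log a))) := by
            field_simp
      _ ≤ p * q ^ K m (n+1) := by nlinarith [key]
    -- contradiction with non-summability
    have hS1 : Summable (fun n => p * q ^ K m (n+1)) := (summable_nat_add_iff 1).2 hS
    have hS2 : Summable (fun n : ℕ =>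
        (p * s / E) * (1 / ((((n:ℝ)) + 2) * Real.log (((n:ℝ)) + 2)))) :=
      Summable.of_nonneg_of_le (fun n => by
        have h2 : (2:ℝ) ≤ (n:ℝ) + 2 := by linarith [Nat.cast_nonneg (α := ℝ) n]
        have := Real.log_pos (show (1:ℝ) < (n:ℝ)+2 by linarith)
        positivity) hbound hS1
    have hS3 : Summable (fun n : ℕ => 1 / ((((n:ℝ)) + 2) * Real.log (((n:ℝ)) + 2))) := by
      have h0 := hS2.mul_left ((p * s / E)⁻¹)
      have he : (fun n : ℕ => (p * s / E)⁻¹ * ((p * s / E) *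
          (1 / ((((n:ℝ)) + 2) * Real.log (((n:ℝ)) + 2))))) =
          (fun n : ℕ => 1 / ((((n:ℝ)) + 2) * Real.log (((n:ℝ)) + 2))) := by
        funext n
        rw [← mul_assoc, inv_mul_cancel₀ (by positivity), one_mul]
      rwa [he] at h0
    exact aux_not_summable_one_div_nat_log hS3
  -- Borel–Cantelli II
  have hfreqA : ∀ m : ℕ, ∀ᵐ ω ∂ℙ, ∃ᶠ n in atTop, ω ∈ A m n := by
    intro m
    have hone := measure_limsup_eq_one (hAm m) (hindepA m) (hsum_top m)
    have hms : MeasurableSet (limsup (A m) atTop) :=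
      MeasurableSet.measurableSet_limsup (fun n => hAm m n)
    have hcompl : ℙ ((limsup (A m) atTop)ᶜ) = 0 := by
      rw [measure_compl hms (measure_ne_top _ _), hone, measure_univ, tsub_self]
    have hmem : ∀ᵐ ω ∂ℙ, ω ∈ limsup (A m) atTop := by
      rw [eventually_iff, mem_ae_iff]
      simpa using hcompl
    filter_upwards [hmem] with ω hω
    rwa [mem_limsup_iff_frequently_mem] at hω
  -- Final assembly
  filter_upwards [hsupp_ae, ae_all_iff.2 hfreqA] with ω hsupp hfreq c
  obtain ⟨m, hmc⟩ := exists_nat_ge c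
  have hXpos : ∀ i, 0 ≤ X i ω := by
    intro i
    obtain ⟨k, hk⟩ := hsupp i
    rw [hk]
    have : (1:ℝ) ≤ r ^ k := one_le_pow₀ hr1.le
    nlinarith
  rw [frequently_atTop]
  intro a
  obtain ⟨n, hna, hAn⟩ := frequently_atTop.1 (hfreq m) (max a 1)
  refine ⟨n + 1, le_trans (le_trans (le_max_left a 1) hna) (Nat.le_succ n), ?_⟩
  have hn1 : 1 ≤ n := le_trans (le_max_right a 1) hna
  have hXn : X n ω = s * r ^ K m n := by
    simpa [hA, Set.mem_preimage, Set.mem_singleton_iff] using hAn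
  have hd : 0 < ((n:ℝ)+1) * Real.logb r ((n:ℝ)+1) := by
    have h3 : (1:ℝ) ≤ (n:ℝ) := by exact_mod_cast hn1
    have h2 : (1:ℝ) < (n:ℝ) + 1 := by linarith
    have h4 : 0 < Real.logb r ((n:ℝ)+1) := Real.logb_pos hr1 h2
    positivity
  have hXgt : ((m:ℝ)+1) * (((n:ℝ)+1) * Real.logb r ((n:ℝ)+1)) < X n ω := by
    rw [hXn, ← mul_assoc]
    exact hKspec m n
  have hsum_ge : X n ω ≤ ∑ i ∈ Finset.range (n+1), X i ω :=
    Finset.single_le_sum (fun i _ => hXpos i) (Finset.self_mem_range_succ n)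
  have hSgt : ((m:ℝ)+1) * (((n:ℝ)+1) * Real.logb r ((n:ℝ)+1)) <
      ∑ i ∈ Finset.range (n+1), X i ω := lt_of_lt_of_le hXgt hsum_ge
  have hdiv : ((m:ℝ)+1) < (∑ i ∈ Finset.range (n+1), X i ω) /
      (((n:ℝ)+1) * Real.logb r ((n:ℝ)+1)) := (lt_div_iff₀ hd).2 hSgt
  have hcast : ((n+1 : ℕ):ℝ) = (n:ℝ) + 1 := by push_cast; ring
  rw [hcast]
  calc c ≤ (m:ℝ) := hmc
  _ < (m:ℝ) + 1 := by linarith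
  _ < _ := hdiv
end

section
/- Let X satisfy P(X = s·r^(k−1)) = p·q^(k−1), k ≥ 1, with 0 < p < 1, q = 1 − p, s > 0, r = 1/q, and define μ(x) = ∫₀^x P(X > y) dy. Then μ(x) ∼ s·p·log_r(x/s) as x → ∞, and consequently μ(x·log₂ x) ∼ μ(x) as x → ∞. -/
open MeasureTheory ProbabilityTheory Filter

theorem petersburg_mu_asymptotics
    {Ω : Type*} [MeasureSpace Ω] [IsProbabilityMeasure (ℙ : Measure Ω)]
    (X : Ω → ℝ) (hX : Measurable X) (p q s r : ℝ)
    (hp : 0 < p) (hp1 : p < 1) (hq : q = 1 - p) (hs : 0 < s) (hr : r = 1 / q)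
    (hlaw : ∀ k : ℕ, ℙ {ω | X ω = s * r ^ k} = ENNReal.ofReal (p * q ^ k))
    (μ : ℝ → ℝ)
    (hμ : ∀ x : ℝ, μ x = ∫ y in (0 : ℝ)..x, (ℙ {ω | y < X ω}).toReal) :
    Filter.Tendsto (fun x : ℝ => μ x / (s * p * Real.logb r (x / s)))
        Filter.atTop (nhds 1)
      ∧ Filter.Tendsto (fun x : ℝ => μ (x * Real.logb 2 x) / μ x)
        Filter.atTop (nhds 1) := by
  have hq0 : 0 < q := by rw [hq]; linarith
  have hq1 : q < 1 := by rw [hq]; linarith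
  have hr0 : 0 < r := by rw [hr]; positivity
  have hr1 : 1 < r := by rw [hr, lt_div_iff₀ hq0, one_mul]; exact hq1
  have hqr : q * r = 1 := by rw [hr]; field_simp
  have hsp : 0 < s * p := by positivity
  -- the atoms
  set A : ℕ → Set Ω := fun k => {ω | X ω = s * r ^ k} with hA
  have hA_meas : ∀ k, MeasurableSet (A k) := fun k => hX (measurableSet_singleton _)
  have hrpow_mono : StrictMono (fun k : ℕ => s * r ^ k) := fun a b hab => by
    have := pow_lt_pow_right₀ hr1 hab
    exact mul_lt_mul_of_pos_left this hs
  have hA_disj : Pairwise (Function.onFun Disjoint A) := by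
    intro i j hij
    refine Set.disjoint_left.2 fun ω hi hj => hij ?_
    exact hrpow_mono.injective (hi.symm.trans hj : s * r ^ i = s * r ^ j)
  have hsum_geo : ∀ n : ℕ, ∑' k : ℕ, (p * q ^ (k + n)) = q ^ n := by
    intro n
    have h1 : ∑' k : ℕ, (p * q ^ (k + n)) = p * q ^ n * ∑' k : ℕ, q ^ k := by
      rw [← tsum_mul_left]
      congr 1; funext k; rw [pow_add]; ring
    rw [h1, tsum_geometric_of_lt_one hq0.le hq1]
    rw [hq, sub_sub_cancel, mul_right_comm, mul_inv_cancel₀ hp.ne', one_mul]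
  have hsummable : ∀ n : ℕ, Summable (fun k : ℕ => p * q ^ (k + n)) := by
    intro n
    have : Summable (fun k : ℕ => q ^ k) := summable_geometric_of_lt_one hq0.le hq1
    refine (this.mul_left (p * q ^ n)).congr fun k => ?_
    rw [pow_add]; ring
  have hU : ℙ (⋃ k, A k) = 1 := by
    rw [measure_iUnion hA_disj hA_meas]
    have : ∀ k, ℙ (A k) = ENNReal.ofReal (p * q ^ k) := hlaw
    simp_rw [this]
    rw [← ENNReal.ofReal_tsum_of_nonneg (fun k => by positivity)
      (by simpa using hsummable 0)]
    have := hsum_geo 0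
    simp only [add_zero] at this
    rw [this]; simp
  have hUc : ℙ ((⋃ k, A k)ᶜ) = 0 := by
    rw [measure_compl (MeasurableSet.iUnion hA_meas) (measure_ne_top _ _), hU]
    simp
  -- the tail probability
  have hF : ∀ (n : ℕ) (y : ℝ), (∀ m, m < n → s * r ^ m ≤ y) → y < s * r ^ n →
      ℙ {ω | y < X ω} = ENNReal.ofReal (q ^ n) := by
    intro n y hlo hhi
    have h1 : ℙ {ω | y < X ω} = ℙ ({ω | y < X ω} ∩ ⋃ k, A k) :=
      (measure_inter_conull hUc).symm
    rw [h1, Set.inter_iUnion]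
    rw [measure_iUnion (f := fun k => {ω | y < X ω} ∩ A k)
      (fun i j hij => ((hA_disj hij).mono Set.inter_subset_right Set.inter_subset_right))
      (fun k => ((hX measurableSet_Ioi).inter (hA_meas k)))]
    have hpiece : ∀ k, ℙ ({ω | y < X ω} ∩ A k) =
        if n ≤ k then ENNReal.ofReal (p * q ^ k) else 0 := by
      intro k
      by_cases hk : n ≤ k
      · have : {ω | y < X ω} ∩ A k = A k := by
          refine Set.inter_eq_self_of_subset_right fun ω hωk => ?_
          have : X ω = s * r ^ k := hωk
          have hle : s * r ^ n ≤ s * r ^ k := by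
            rcases eq_or_lt_of_le hk with h | h
            · rw [h]
            · exact (hrpow_mono h).le
          simp only [Set.mem_setOf_eq, this]
          linarith
        rw [this, hlaw k, if_pos hk]
      · push_neg at hk
        have : {ω | y < X ω} ∩ A k = ∅ := by
          refine Set.eq_empty_iff_forall_notMem.2 fun ω ⟨hω1, hω2⟩ => ?_
          have hXω : X ω = s * r ^ k := hω2
          have : s * r ^ k ≤ y := hlo k hk
          simp only [Set.mem_setOf_eq, hXω] at hω1
          linarith
        rw [this, if_neg (not_le.2 hk)]; simp
    simp_rw [hpiece]
    have hinj : Function.Injective (fun k : ℕ => k + n) := add_left_injective n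
    have hsupp : Function.support (fun k => if n ≤ k then ENNReal.ofReal (p * q ^ k) else 0)
        ⊆ Set.range (fun k : ℕ => k + n) := by
      intro k hk
      have hnk : n ≤ k := by
        by_contra h
        exact hk (if_neg h)
      exact ⟨k - n, Nat.sub_add_cancel hnk⟩
    rw [← Function.Injective.tsum_eq hinj hsupp]
    have heq : ∀ k : ℕ, (if n ≤ k + n then ENNReal.ofReal (p * q ^ (k + n)) else 0)
        = ENNReal.ofReal (p * q ^ (k + n)) := fun k => if_pos (Nat.le_add_left n k)
    simp_rw [heq]
    rw [← ENNReal.ofReal_tsum_of_nonneg (fun k => by positivity) (hsummable n), hsum_geo n]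
  -- F and its step values
  set F : ℝ → ℝ := fun y => (ℙ {ω | y < X ω}).toReal with hFdef
  have hF_nonneg : ∀ y, 0 ≤ F y := fun y => ENNReal.toReal_nonneg
  have hF_anti : Antitone F := by
    intro a b hab
    exact ENNReal.toReal_le_toReal (measure_ne_top _ _) (measure_ne_top _ _) |>.2
      (measure_mono fun ω hω => lt_of_le_of_lt hab hω)
  have hInt : ∀ a b : ℝ, IntervalIntegrable F volume a b := fun a b =>
    hF_anti.intervalIntegrable
  have hμdiff : ∀ a b : ℝ, μ b = μ a + ∫ y in a..b, F y := by
    intro a b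
    rw [hμ a, hμ b, intervalIntegral.integral_add_adjacent_intervals (hInt 0 a) (hInt a b)]
  have hae_ne : ∀ c : ℝ, ∀ᵐ t : ℝ, t ≠ c := by
    intro c
    rw [MeasureTheory.ae_iff]
    simpa using Real.volume_singleton (a := c)
  have hstepint : ∀ (a b c : ℝ), a < b → (∀ y, a ≤ y → y < b → F y = c) →
      (∫ y in a..b, F y) = c * (b - a) := by
    intro a b c hab hval
    have hcongr : ∀ᵐ y : ℝ, y ∈ Set.uIoc a b → F y = (fun _ => c) y := by
      filter_upwards [hae_ne b] with y hy hymem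
      rw [Set.uIoc_of_le hab.le] at hymem
      exact hval y hymem.1.le (lt_of_le_of_ne hymem.2 hy)
    rw [intervalIntegral.integral_congr_ae hcongr, intervalIntegral.integral_const, smul_eq_mul]
    ring
  have hFval0 : ∀ y, 0 ≤ y → y < s → F y = 1 := by
    intro y _ hys
    rw [hFdef]
    simp only
    rw [hF 0 y (fun m hm => by omega) (by simpa using hys)]
    simp
  have hFvaln : ∀ (n : ℕ) (y : ℝ), s * r ^ n ≤ y → y < s * r ^ (n + 1) →
      F y = q ^ (n + 1) := by
    intro n y hy1 hy2
    rw [hFdef]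
    simp only
    rw [hF (n + 1) y (fun m hm => le_trans (by
      rcases eq_or_lt_of_le (Nat.lt_succ_iff.1 hm) with h | h
      · rw [h]
      · exact (hrpow_mono h).le) hy1) hy2]
    rw [ENNReal.toReal_ofReal (by positivity)]
  -- values of μ
  have hμs : μ s = s := by
    have := hμdiff 0 s
    rw [hμ 0, intervalIntegral.integral_same] at this
    rw [this, hstepint 0 s 1 hs (fun y h1 h2 => hFval0 y h1 h2)]
    ring
  have hμstep : ∀ n : ℕ, μ (s * r ^ (n + 1)) = μ (s * r ^ n) + s * p := by
    intro n
    have hab : s * r ^ n < s * r ^ (n + 1) := hrpow_mono (Nat.lt_succ_self n)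
    rw [hμdiff (s * r ^ n) (s * r ^ (n + 1)),
      hstepint _ _ (q ^ (n + 1)) hab (fun y h1 h2 => hFvaln n y h1 h2)]
    congr 1
    have h1 : q ^ (n + 1) * r ^ (n + 1) = 1 := by
      rw [← mul_pow, hqr, one_pow]
    have h2 : q ^ n * r ^ n = 1 := by
      rw [← mul_pow, hqr, one_pow]
    have : q ^ (n + 1) * (s * r ^ (n + 1) - s * r ^ n)
        = s * (q ^ (n + 1) * r ^ (n + 1)) - s * q * (q ^ n * r ^ n) := by ring
    rw [this, h1, h2, hq]; ring
  have hμval : ∀ n : ℕ, μ (s * r ^ n) = s + n * s * p := by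
    intro n
    induction n with
    | zero => simpa using hμs
    | succ n ih => rw [hμstep n, ih]; push_cast; ring
  have hμmono : ∀ a b : ℝ, a ≤ b → μ a ≤ μ b := by
    intro a b hab
    rw [hμdiff a b]
    have : 0 ≤ ∫ y in a..b, F y :=
      intervalIntegral.integral_nonneg hab (fun u _ => hF_nonneg u)
    linarith
  -- the logarithmic scale
  set L : ℝ → ℝ := fun x => Real.logb r (x / s) with hL
  have hL_tendsto : Tendsto L atTop atTop :=
    (Real.tendsto_logb_atTop hr1).comp (tendsto_id.atTop_div_const hs)
  -- key bounds
  have hbounds : ∀ᶠ x in atTop,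
      ((s - s * p) / (s * p) * (L x)⁻¹ + 1 ≤ μ x / (s * p * L x)
      ∧ μ x / (s * p * L x) ≤ (s + s * p) / (s * p) * (L x)⁻¹ + 1)
      ∧ s ≤ μ x := by
    filter_upwards [eventually_ge_atTop s, hL_tendsto.eventually_ge_atTop 1]
      with x hxs hLx1
    have hx0 : 0 < x := lt_of_lt_of_le hs hxs
    have hxs0 : 0 < x / s := div_pos hx0 hs
    set n : ℕ := ⌊L x⌋₊ with hn
    have hn1 : (n : ℝ) ≤ L x := Nat.floor_le (by linarith)
    have hn2 : L x < n + 1 := Nat.lt_floor_add_one _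
    have hrL : r ^ (L x) = x / s := Real.rpow_logb hr0 (ne_of_gt hr1) hxs0
    have hxlow : s * r ^ n ≤ x := by
      have h1 : (r : ℝ) ^ (n : ℝ) ≤ r ^ (L x) :=
        (Real.rpow_le_rpow_left_iff hr1).2 hn1
      rw [hrL, Real.rpow_natCast] at h1
      calc s * r ^ n ≤ s * (x / s) := mul_le_mul_of_nonneg_left h1 hs.le
        _ = x := by field_simp
    have hxhigh : x ≤ s * r ^ (n + 1) := by
      have h1 : (r : ℝ) ^ (L x) ≤ r ^ ((n : ℝ) + 1) :=
        (Real.rpow_le_rpow_left_iff hr1).2 hn2.le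
      rw [hrL] at h1
      have : (r : ℝ) ^ ((n : ℝ) + 1) = r ^ (n + 1) := by
        rw [← Real.rpow_natCast r (n + 1)]; push_cast; ring_nf
      rw [this] at h1
      calc x = s * (x / s) := by field_simp
        _ ≤ s * r ^ (n + 1) := mul_le_mul_of_nonneg_left h1 hs.le
    have hμlow : s + (L x - 1) * (s * p) ≤ μ x := by
      have h1 := hμmono _ _ hxlow
      rw [hμval n] at h1
      nlinarith [hsp]
    have hμhigh : μ x ≤ s + (L x + 1) * (s * p) := by
      have h1 := hμmono _ _ hxhigh
      rw [hμval (n + 1)] at h1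
      push_cast at h1
      nlinarith [hsp]
    have hLpos : 0 < L x := by linarith
    have hden : 0 < s * p * L x := by positivity
    refine ⟨⟨?_, ?_⟩, by nlinarith⟩
    · rw [le_div_iff₀ hden]
      have : ((s - s * p) / (s * p) * (L x)⁻¹ + 1) * (s * p * L x)
          = s + (L x - 1) * (s * p) := by field_simp; ring
      linarith [this.le.trans hμlow]
    · rw [div_le_iff₀ hden]
      have : ((s + s * p) / (s * p) * (L x)⁻¹ + 1) * (s * p * L x)
          = s + (L x + 1) * (s * p) := by field_simp; ring
      linarith [hμhigh.trans this.ge]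
  have hinv0 : Tendsto (fun x => (L x)⁻¹) atTop (nhds 0) :=
    tendsto_inv_atTop_zero.comp hL_tendsto
  have hlowlim : Tendsto (fun x => (s - s * p) / (s * p) * (L x)⁻¹ + 1) atTop (nhds 1) := by
    have := (hinv0.const_mul ((s - s * p) / (s * p))).add_const 1
    simpa using this
  have hhighlim : Tendsto (fun x => (s + s * p) / (s * p) * (L x)⁻¹ + 1) atTop (nhds 1) := by
    have := (hinv0.const_mul ((s + s * p) / (s * p))).add_const 1
    simpa using this
  have T1 : Tendsto (fun x : ℝ => μ x / (s * p * L x)) atTop (nhds 1) :=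
    tendsto_of_tendsto_of_tendsto_of_le_of_le' hlowlim hhighlim
      (hbounds.mono fun x hx => hx.1.1) (hbounds.mono fun x hx => hx.1.2)
  refine ⟨T1, ?_⟩
  -- second part
  set φ : ℝ → ℝ := fun x => x * Real.logb 2 x with hφdef
  have hφ : Tendsto φ atTop atTop := by
    refine tendsto_atTop_mono' atTop ?_ tendsto_id
    filter_upwards [eventually_ge_atTop (4 : ℝ)] with x hx4
    have hx0 : (0 : ℝ) < x := by linarith
    have h1 : (1 : ℝ) ≤ Real.logb 2 x := by
      rw [show (1 : ℝ) = Real.logb 2 2 by simp]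
      exact (Real.logb_le_logb one_lt_two two_pos (by linarith)).2 (by linarith)
    calc (id x : ℝ) = x * 1 := (mul_one x).symm
      _ ≤ x * Real.logb 2 x := mul_le_mul_of_nonneg_left h1 hx0.le
  have T1φ : Tendsto (fun x : ℝ => μ (φ x) / (s * p * L (φ x))) atTop (nhds 1) :=
    T1.comp hφ
  have T3 : Tendsto (fun x : ℝ => s * p * L x / μ x) atTop (nhds 1) := by
    have := T1.inv₀ one_ne_zero
    simp only [inv_div, inv_one] at this
    exact this
  -- middle factor
  have hloglog : Tendsto (fun x : ℝ => Real.log (Real.log x) / Real.log x) atTop (nhds 0) :=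
    (Real.isLittleO_log_id_atTop.tendsto_div_nhds_zero).comp Real.tendsto_log_atTop
  have hloginv : Tendsto (fun x : ℝ => (Real.log x)⁻¹) atTop (nhds 0) :=
    Real.tendsto_log_atTop.inv_tendsto_atTop
  set c : ℝ := Real.log (Real.log 2) with hc
  set d : ℝ := Real.log s with hd
  have hRlim : Tendsto (fun x : ℝ =>
      (1 + Real.log (Real.log x) / Real.log x - (c + d) * (Real.log x)⁻¹)
      / (1 - d * (Real.log x)⁻¹)) atTop (nhds 1) := by
    have hnum : Tendsto (fun x : ℝ =>
        1 + Real.log (Real.log x) / Real.log x - (c + d) * (Real.log x)⁻¹)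
        atTop (nhds 1) := by
      have := (tendsto_const_nhds (x := (1 : ℝ)) (f := atTop)).add hloglog
        |>.sub (hloginv.const_mul (c + d))
      simpa using this
    have hden : Tendsto (fun x : ℝ => 1 - d * (Real.log x)⁻¹) atTop (nhds 1) := by
      have := (tendsto_const_nhds (x := (1 : ℝ)) (f := atTop)).sub
        (hloginv.const_mul d)
      simpa using this
    have := hnum.div hden one_ne_zero
    rw [div_one] at this
    exact this
  have M : Tendsto (fun x : ℝ => L (φ x) / L x) atTop (nhds 1) := by
    refine hRlim.congr' ?_
    filter_upwards [eventually_gt_atTop (1 : ℝ),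
      Real.tendsto_log_atTop.eventually_ge_atTop (|d| + 1),
      Real.tendsto_log_atTop.eventually_ge_atTop 1] with x hx1 hlogd hlog1
    have hx0 : (0 : ℝ) < x := by linarith
    have hlogx : 0 < Real.log x := by linarith
    have hlogb2 : 0 < Real.logb 2 x := Real.logb_pos one_lt_two hx1
    have hφpos : 0 < φ x := mul_pos hx0 hlogb2
    have hlogr : 0 < Real.log r := Real.log_pos hr1
    have hlogφ : Real.log (φ x) = Real.log x + (Real.log (Real.log x) - c) := by
      rw [hφdef]
      simp only
      rw [Real.log_mul (ne_of_gt hx0) (ne_of_gt hlogb2)]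
      congr 1
      rw [Real.logb, Real.log_div (ne_of_gt hlogx) (ne_of_gt (Real.log_pos one_lt_two))]
    have hLφ : L (φ x) = (Real.log (φ x) - d) / Real.log r := by
      rw [hL]
      simp only
      rw [Real.logb, Real.log_div (ne_of_gt hφpos) (ne_of_gt hs)]
    have hLx : L x = (Real.log x - d) / Real.log r := by
      rw [hL]
      simp only
      rw [Real.logb, Real.log_div (ne_of_gt hx0) (ne_of_gt hs)]
    have habs : d < Real.log x := lt_of_lt_of_le (lt_of_le_of_lt (le_abs_self d)
      (by linarith)) hlogd
    have hxd : 0 < Real.log x - d := by linarith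
    have h1 : Real.log x ≠ 0 := ne_of_gt hlogx
    have h2 : Real.log x - d ≠ 0 := ne_of_gt hxd
    have h3 : Real.log r ≠ 0 := ne_of_gt hlogr
    have h4 : 1 - d * (Real.log x)⁻¹ ≠ 0 := by
      have he : 1 - d * (Real.log x)⁻¹ = (Real.log x - d) / Real.log x := by
        field_simp
      rw [he]
      exact ne_of_gt (div_pos hxd hlogx)
    rw [hLφ, hLx, hlogφ]
    field_simp
    ring
  -- combine
  have hLφpos : ∀ᶠ x in atTop, 1 ≤ L (φ x) := (hL_tendsto.comp hφ).eventually_ge_atTop 1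
  have hfinal : Tendsto (fun x : ℝ => μ (φ x) / μ x) atTop (nhds 1) := by
    have hprod := (T1φ.mul M).mul T3
    rw [show (1 : ℝ) * 1 * 1 = 1 by ring] at hprod
    refine hprod.congr' ?_
    filter_upwards [hbounds, hL_tendsto.eventually_ge_atTop 1, hLφpos]
      with x hx hLx1 hLφ1
    have hμx : 0 < μ x := lt_of_lt_of_le hs hx.2
    have hLx0 : L x ≠ 0 := by intro h; rw [h] at hLx1; linarith
    have hLφ0 : L (φ x) ≠ 0 := by intro h; rw [h] at hLφ1; linarith
    field_simp
  exact hfinal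
end
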